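/- arXiv:1202.4121 — 2 statements merged into one kernel-verified Lean document; each statement's English description precedes it below -/
import Mathlib

section
/- Let C be a coalgebra over a field k with an exhaustive coalgebra filtration {F_n}_{n≥0} (so Δ(F_n) ⊆ Σ_{i=0}^{n} F_i ⊗ F_{n−i}) such that F_0 = C_0, the coradical of C. If the associated graded coalgebra gr_F C = ⊕_{n≥0} F_n/F_{n−1} is coradically graded, then F_n = C_n for all n, i.e. {F_n} is the coradical filtration of C. -/
open scoped TensorProduct ENNReal

/-- Gelfand–Kirillov dimension of a `k`-algebra `A`. -/
noncomputable def gkDim (k A : Type*) [Field k] [Ring A] [Algebra k A] : ℝ≥0∞ :=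
  ⨆ (V : Submodule k A) (_ : (1 : A) ∈ V) (_ : FiniteDimensional k V),
    Filter.limsup
      (fun n : ℕ => ENNReal.ofReal
        (Real.log (Module.finrank k ↥(V ^ n)) / Real.log n)) Filter.atTop

/-- A submodule is a subcoalgebra if comultiplication maps it into its (image) tensor square. -/
def IsSubcoalgebra (k : Type*) {A : Type*} [CommSemiring k] [AddCommMonoid A] [Module k A]
    [Coalgebra k A] (C : Submodule k A) : Prop :=
  ∀ x ∈ C, Coalgebra.comul (R := k) x ∈
    LinearMap.range (TensorProduct.map C.subtype C.subtype)

/-- The coradical: the sum of all simple subcoalgebras. -/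
noncomputable def coradical (k A : Type*) [CommSemiring k] [AddCommMonoid A] [Module k A]
    [Coalgebra k A] : Submodule k A :=
  sSup {S | IsSubcoalgebra k S ∧ S ≠ ⊥ ∧
    ∀ T ≤ S, IsSubcoalgebra k T → T = ⊥ ∨ T = S}

/-- The image of `C ⊗ D` inside `A ⊗ A`. -/
noncomputable def tensorSubmodule (k : Type*) {A : Type*} [CommSemiring k] [AddCommMonoid A]
    [Module k A] (C D : Submodule k A) : Submodule k (A ⊗[k] A) :=
  LinearMap.range (TensorProduct.map C.subtype D.subtype)

/-- The coradical filtration `C_n = Δ⁻¹(A ⊗ C_{n-1} + C_0 ⊗ A)`. -/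
noncomputable def coradFilt (k : Type*) (A : Type*) [CommSemiring k] [AddCommMonoid A]
    [Module k A] [Coalgebra k A] : ℕ → Submodule k A
  | 0 => coradical k A
  | (n + 1) => Submodule.comap (Coalgebra.comul : A →ₗ[k] A ⊗[k] A)
      (tensorSubmodule k ⊤ (coradFilt k A n) ⊔ tensorSubmodule k (coradical k A) ⊤)

/-- Group-like elements. -/
def IsGrpLike (k : Type*) {A : Type*} [CommSemiring k] [AddCommMonoid A] [Module k A]
    [Coalgebra k A] (g : A) : Prop :=
  Coalgebra.counit (R := k) g = 1 ∧ Coalgebra.comul (R := k) g = g ⊗ₜ[k] g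

/-- A coalgebra is pointed if its coradical is spanned by the group-like elements. -/
def IsPointedCoalg (k A : Type*) [CommSemiring k] [AddCommMonoid A] [Module k A]
    [Coalgebra k A] : Prop :=
  coradical k A = Submodule.span k {g : A | IsGrpLike k g}

/-- A Hopf algebra is connected if its coradical is `k·1`. -/
def IsConnectedHopf (k A : Type*) [CommSemiring k] [Semiring A] [Module k A] [Algebra k A]
    [Coalgebra k A] : Prop :=
  coradical k A = Submodule.span k {(1 : A)}

/-- The space of primitive elements of a bialgebra. -/
noncomputable def primitives (k A : Type*) [CommRing k] [Ring A] [Module k A]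
    [Coalgebra k A] : Submodule k A :=
  LinearMap.ker ((Coalgebra.comul : A →ₗ[k] A ⊗[k] A) -
    ((TensorProduct.mk k A A).flip 1 + TensorProduct.mk k A A 1))

/-- The span of products of at most `n` (and at least one) elements of `W`. -/
noncomputable def subPow (k : Type*) {A : Type*} [CommSemiring k] [Semiring A] [Algebra k A]
    (W : Submodule k A) (n : ℕ) : Submodule k A :=
  ⨆ i ∈ Finset.Icc 1 n, W ^ i

/-- A Hopf subalgebra: a subalgebra which is also a subcoalgebra and is stable under
the antipode. -/
def IsHopfSubalgebra (k : Type*) {H : Type*} [CommSemiring k] [Semiring H] [HopfAlgebra k H]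
    (B : Subalgebra k H) : Prop :=
  (∀ x ∈ B, Coalgebra.comul (R := k) x ∈
      LinearMap.range (TensorProduct.map B.toSubmodule.subtype B.toSubmodule.subtype)) ∧
  (∀ x ∈ B, HopfAlgebra.antipode (R := k) x ∈ B)

/-- `F (n-1)` with the convention `F (-1) = ⊥`. -/
def filtPred {k A : Type*} [CommSemiring k] [AddCommMonoid A] [Module k A]
    (F : ℕ → Submodule k A) : ℕ → Submodule k A
  | 0 => ⊥
  | (n + 1) => F n

/-- The `n`-th graded piece `F n / F (n-1)` of a filtration. -/
abbrev filtPiece {k A : Type*} [Field k] [AddCommGroup A] [Module k A]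
    (F : ℕ → Submodule k A) (n : ℕ) :=
  ↥(F n) ⧸ Submodule.comap (F n).subtype (filtPred F n)
open TensorProduct LinearMap

namespace CoradAux

variable {k : Type*} [Field k]
variable {M N P Q M' N' : Type*} [AddCommGroup M] [Module k M] [AddCommGroup N] [Module k N]
  [AddCommGroup P] [Module k P] [AddCommGroup Q] [Module k Q]
  [AddCommGroup M'] [Module k M'] [AddCommGroup N'] [Module k N']

/-- image of `U ⊗ V` inside `M ⊗ N`. -/
noncomputable def tsub (U : Submodule k M) (V : Submodule k N) : Submodule k (M ⊗[k] N) :=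
  LinearMap.range (TensorProduct.map U.subtype V.subtype)

theorem tmul_mem_tsub {U : Submodule k M} {V : Submodule k N} {a : M} {b : N}
    (ha : a ∈ U) (hb : b ∈ V) : a ⊗ₜ[k] b ∈ tsub U V :=
  ⟨(⟨a, ha⟩ : U) ⊗ₜ[k] (⟨b, hb⟩ : V), rfl⟩

theorem map_mem_tsub_range (φ : M →ₗ[k] M') (ψ : N →ₗ[k] N') (t : M ⊗[k] N) :
    TensorProduct.map φ ψ t ∈ tsub (range φ) (range ψ) := by
  induction t with
  | zero => simp [Submodule.zero_mem]
  | tmul a b => exact tmul_mem_tsub ⟨a, rfl⟩ ⟨b, rfl⟩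
  | add x y hx hy => rw [map_add]; exact Submodule.add_mem _ hx hy

theorem tsub_mono {U U' : Submodule k M} {V V' : Submodule k N} (hU : U ≤ U') (hV : V ≤ V') :
    tsub U V ≤ tsub U' V' := by
  rintro t ⟨s, rfl⟩
  have : TensorProduct.map U.subtype V.subtype =
      (TensorProduct.map U'.subtype V'.subtype).comp
        (TensorProduct.map (Submodule.inclusion hU) (Submodule.inclusion hV)) := by
    rw [← TensorProduct.map_comp]; rfl
  rw [this]
  exact ⟨_, rfl⟩

theorem tsub_top_right (U : Submodule k M) :
    tsub U (⊤ : Submodule k N) = range (rTensor N U.subtype) := by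
  apply le_antisymm
  · rintro t ⟨s, rfl⟩
    rw [← rTensor_comp_lTensor, LinearMap.comp_apply]
    exact ⟨_, rfl⟩
  · rintro t ⟨s, rfl⟩
    induction s with
    | zero => simp [Submodule.zero_mem]
    | tmul a b => rw [rTensor_tmul]; exact tmul_mem_tsub a.2 Submodule.mem_top
    | add x y hx hy => rw [map_add]; exact Submodule.add_mem _ hx hy

theorem tsub_top_left (V : Submodule k N) :
    tsub (⊤ : Submodule k M) V = range (lTensor M V.subtype) := by
  apply le_antisymm
  · rintro t ⟨s, rfl⟩
    rw [← lTensor_comp_rTensor, LinearMap.comp_apply]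
    exact ⟨_, rfl⟩
  · rintro t ⟨s, rfl⟩
    induction s with
    | zero => simp [Submodule.zero_mem]
    | tmul a b => rw [lTensor_tmul]; exact tmul_mem_tsub Submodule.mem_top b.2
    | add x y hx hy => rw [map_add]; exact Submodule.add_mem _ hx hy

theorem ker_lTensor_eq (g : N →ₗ[k] P) :
    ker (lTensor M g) = tsub (⊤ : Submodule k M) (ker g) := by
  have h := Module.Flat.lTensor_exact (R := k) M (LinearMap.exact_subtype_ker_map g)
  rw [tsub_top_left, ← h.linearMap_ker_eq]

theorem ker_rTensor_eq (f : M →ₗ[k] P) :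
    ker (rTensor N f) = tsub (ker f) (⊤ : Submodule k N) := by
  have h := Module.Flat.rTensor_exact (R := k) N (LinearMap.exact_subtype_ker_map f)
  rw [tsub_top_right, ← h.linearMap_ker_eq]

theorem comap_lTensor_tsub (f : N →ₗ[k] P) (S : Submodule k P) :
    Submodule.comap (lTensor M f) (tsub (⊤ : Submodule k M) S) =
      tsub (⊤ : Submodule k M) (Submodule.comap f S) := by
  calc Submodule.comap (lTensor M f) (tsub (⊤ : Submodule k M) S)
      = Submodule.comap (lTensor M f) (ker (lTensor M S.mkQ)) := by
        rw [ker_lTensor_eq, Submodule.ker_mkQ]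
    _ = ker ((lTensor M S.mkQ) ∘ₗ (lTensor M f)) := (ker_comp _ _).symm
    _ = ker (lTensor M (S.mkQ ∘ₗ f)) := by rw [lTensor_comp]
    _ = tsub (⊤ : Submodule k M) (ker (S.mkQ ∘ₗ f)) := ker_lTensor_eq _
    _ = tsub (⊤ : Submodule k M) (Submodule.comap f S) := by rw [ker_comp, Submodule.ker_mkQ]

theorem comap_rTensor_tsub (f : M →ₗ[k] P) (Y : Submodule k N) :
    Submodule.comap (rTensor N f) (tsub (⊤ : Submodule k P) Y) =
      tsub (ker f) (⊤ : Submodule k N) ⊔ tsub (⊤ : Submodule k M) Y := by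
  apply le_antisymm
  · intro t ht
    obtain ⟨Y', hY'⟩ := Submodule.exists_isCompl Y
    set π : N →ₗ[k] N := Y.subtype ∘ₗ Y.linearProjOfIsCompl Y' hY' with hπ
    set π' : N →ₗ[k] N := Y'.subtype ∘ₗ Y'.linearProjOfIsCompl Y hY'.symm with hπ'
    have hsum : lTensor M π t + lTensor M π' t = t := by
      have : π + π' = LinearMap.id := by
        ext x; exact Submodule.projection_add_projection_eq_self hY' x
      rw [← LinearMap.add_apply, ← lTensor_add, this, lTensor_id, LinearMap.id_apply]
    rw [← hsum]
    apply Submodule.add_mem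
    · apply Submodule.mem_sup_right
      rw [tsub_top_left, hπ, lTensor_comp]
      exact ⟨_, rfl⟩
    · apply Submodule.mem_sup_left
      have hmem : rTensor N f t ∈ tsub (⊤ : Submodule k P) Y := ht
      have hcomm : rTensor N f (lTensor M π' t) = lTensor P π' (rTensor N f t) := by
        rw [← LinearMap.comp_apply, ← LinearMap.comp_apply, rTensor_comp_lTensor,
          lTensor_comp_rTensor]
      have hkill : lTensor P π' (rTensor N f t) = 0 := by
        rw [tsub_top_left] at hmem
        obtain ⟨s, hs⟩ := hmem
        rw [← hs, ← LinearMap.comp_apply, ← lTensor_comp]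
        have hz : π' ∘ₗ Y.subtype = 0 := by
          ext x
          simp [hπ']
          exact Submodule.projectionOnto_apply_right hY'.symm x
        rw [hz, lTensor_zero, LinearMap.zero_apply]
      have hfin : lTensor M π' t ∈ ker (rTensor N f) := by rw [mem_ker, hcomm, hkill]
      rw [ker_rTensor_eq] at hfin
      exact hfin
  · apply sup_le
    · intro t ht
      have h0 : rTensor N f t = 0 := by
        have h1 : t ∈ ker (rTensor N f) := by rw [ker_rTensor_eq]; exact ht
        exact h1
      simp only [Submodule.mem_comap, h0]
      exact Submodule.zero_mem _
    · intro t ht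
      simp only [Submodule.mem_comap]
      rw [tsub_top_left] at ht ⊢
      obtain ⟨s, rfl⟩ := ht
      rw [← LinearMap.comp_apply, rTensor_comp_lTensor, ← lTensor_comp_rTensor,
        LinearMap.comp_apply]
      exact ⟨_, rfl⟩

theorem ker_map_eq (f : M →ₗ[k] P) (g : N →ₗ[k] Q) :
    ker (TensorProduct.map f g) =
      tsub (ker f) (⊤ : Submodule k N) ⊔ tsub (⊤ : Submodule k M) (ker g) := by
  rw [← lTensor_comp_rTensor, ker_comp, ker_lTensor_eq, comap_rTensor_tsub]

theorem sup_tsub_eq_ker (X : Submodule k M) (Y : Submodule k N) :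
    tsub X (⊤ : Submodule k N) ⊔ tsub (⊤ : Submodule k M) Y =
      ker (TensorProduct.map X.mkQ Y.mkQ) := by
  rw [ker_map_eq, Submodule.ker_mkQ, Submodule.ker_mkQ]

theorem inf_tsub_left (X Y : Submodule k N) :
    tsub (⊤ : Submodule k M) X ⊓ tsub (⊤ : Submodule k M) Y =
      tsub (⊤ : Submodule k M) (X ⊓ Y) := by
  apply le_antisymm
  · intro t ht
    have ht1 := (Submodule.mem_inf.mp ht).1
    have ht2 := (Submodule.mem_inf.mp ht).2
    rw [tsub_top_left] at ht1
    obtain ⟨s, rfl⟩ := ht1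
    have h2 : lTensor M Y.mkQ (lTensor M X.subtype s) = 0 := by
      have h3 : (lTensor M X.subtype) s ∈ ker (lTensor M Y.mkQ) := by
        rw [ker_lTensor_eq, Submodule.ker_mkQ]; exact ht2
      exact h3
    rw [← LinearMap.comp_apply, ← lTensor_comp, ← mem_ker, ker_lTensor_eq, tsub_top_left] at h2
    obtain ⟨s', rfl⟩ := h2
    set ψ : ↥(ker (Y.mkQ ∘ₗ X.subtype)) →ₗ[k] ↥(X ⊓ Y) :=
      LinearMap.codRestrict (X ⊓ Y) (X.subtype ∘ₗ (ker (Y.mkQ ∘ₗ X.subtype)).subtype)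
        (fun c => ⟨c.1.2, by
          have := c.2; rw [mem_ker, LinearMap.comp_apply, ← mem_ker, Submodule.ker_mkQ] at this
          exact this⟩) with hψ
    rw [tsub_top_left]
    refine ⟨lTensor M ψ s', ?_⟩
    rw [← LinearMap.comp_apply, ← lTensor_comp, ← LinearMap.comp_apply, ← lTensor_comp]
    have : (X ⊓ Y).subtype ∘ₗ ψ = X.subtype ∘ₗ (ker (Y.mkQ ∘ₗ X.subtype)).subtype := by
      ext x; rfl
    rw [this]
  · exact le_inf (tsub_mono le_rfl inf_le_left) (tsub_mono le_rfl inf_le_right)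

theorem inf_tsub_mixed (U : Submodule k M) (V : Submodule k N) :
    tsub U (⊤ : Submodule k N) ⊓ tsub (⊤ : Submodule k M) V = tsub U V := by
  apply le_antisymm
  · intro t ht
    have ht1 := (Submodule.mem_inf.mp ht).1
    have ht2 := (Submodule.mem_inf.mp ht).2
    rw [tsub_top_right] at ht1
    obtain ⟨s, rfl⟩ := ht1
    have h2 : lTensor M V.mkQ (rTensor N U.subtype s) = 0 := by
      have h3 : (rTensor N U.subtype) s ∈ ker (lTensor M V.mkQ) := by
        rw [ker_lTensor_eq, Submodule.ker_mkQ]; exact ht2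
      exact h3
    have hcomm : lTensor M V.mkQ (rTensor N U.subtype s) =
        rTensor _ U.subtype (lTensor (↥U) V.mkQ s) := by
      rw [← LinearMap.comp_apply, ← LinearMap.comp_apply, rTensor_comp_lTensor,
        lTensor_comp_rTensor]
    have hinj : Function.Injective (rTensor (N ⧸ V) U.subtype) :=
      Module.Flat.rTensor_preserves_injective_linearMap U.subtype U.injective_subtype
    have h3 : lTensor (↥U) V.mkQ s = 0 := by
      apply hinj; rw [← hcomm, h2, map_zero]
    rw [← mem_ker, ker_lTensor_eq, Submodule.ker_mkQ, tsub_top_left] at h3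
    obtain ⟨s', rfl⟩ := h3
    refine ⟨s', ?_⟩
    rw [← LinearMap.comp_apply, rTensor_comp_lTensor]
  · exact le_inf (tsub_mono le_rfl le_top) (tsub_mono le_top le_rfl)

theorem map_tsub_le (f : M →ₗ[k] M') (g : N →ₗ[k] N') (U : Submodule k M) (V : Submodule k N) :
    Submodule.map (TensorProduct.map f g) (tsub U V) ≤
      tsub (Submodule.map f U) (Submodule.map g V) := by
  rintro t ⟨s, hs, rfl⟩
  obtain ⟨s', rfl⟩ := hs
  rw [← LinearMap.comp_apply, ← TensorProduct.map_comp]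
  have := map_mem_tsub_range (f ∘ₗ U.subtype) (g ∘ₗ V.subtype) s'
  rwa [range_comp, range_comp, Submodule.range_subtype, Submodule.range_subtype] at this

theorem tsub_bot_left (V : Submodule k N) : tsub (⊥ : Submodule k M) V = ⊥ := by
  rw [tsub]
  have h0 : (⊥ : Submodule k M).subtype = 0 := by
    ext x; exact x.2
  rw [h0, TensorProduct.map_zero_left, LinearMap.range_zero]

theorem tsub_bot_right (U : Submodule k M) : tsub U (⊥ : Submodule k N) = ⊥ := by
  rw [tsub]
  have h0 : (⊥ : Submodule k N).subtype = 0 := by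
    ext x; exact x.2
  rw [h0, TensorProduct.map_zero_right, LinearMap.range_zero]

theorem rTensor_comp_map (φ : P →ₗ[k] M') (a : M →ₗ[k] P) (b : N →ₗ[k] N') :
    rTensor N' φ ∘ₗ TensorProduct.map a b = TensorProduct.map (φ ∘ₗ a) b := by
  ext m n; simp

theorem lTensor_comp_map (ψ : Q →ₗ[k] N') (a : M →ₗ[k] M') (b : N →ₗ[k] Q) :
    lTensor M' ψ ∘ₗ TensorProduct.map a b = TensorProduct.map a (ψ ∘ₗ b) := by
  ext m n; simp

theorem rTensor_zero_on_tsub {φ : M →ₗ[k] M'} {U : Submodule k M} (h : φ ∘ₗ U.subtype = 0)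
    {V : Submodule k N} {t : M ⊗[k] N} (ht : t ∈ tsub U V) : rTensor N φ t = 0 := by
  obtain ⟨s, rfl⟩ := ht
  rw [← LinearMap.comp_apply, rTensor_comp_map, h, TensorProduct.map_zero_left,
    LinearMap.zero_apply]

theorem lTensor_zero_on_tsub {ψ : N →ₗ[k] N'} {V : Submodule k N} (h : ψ ∘ₗ V.subtype = 0)
    {U : Submodule k M} {t : M ⊗[k] N} (ht : t ∈ tsub U V) : lTensor M ψ t = 0 := by
  obtain ⟨s, rfl⟩ := ht
  rw [← LinearMap.comp_apply, lTensor_comp_map, h, TensorProduct.map_zero_right,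
    LinearMap.zero_apply]

theorem rTensor_id_on_tsub {φ : M →ₗ[k] M} {U : Submodule k M} (h : φ ∘ₗ U.subtype = U.subtype)
    {V : Submodule k N} {t : M ⊗[k] N} (ht : t ∈ tsub U V) : rTensor N φ t = t := by
  obtain ⟨s, rfl⟩ := ht
  rw [← LinearMap.comp_apply, rTensor_comp_map, h]

theorem rTensor_mem_tsub {φ : M →ₗ[k] M'} {U : Submodule k M} {U' : Submodule k M'}
    (h : ∀ x ∈ U, φ x ∈ U') {V : Submodule k N} {t : M ⊗[k] N} (ht : t ∈ tsub U V) :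
    rTensor N φ t ∈ tsub U' V := by
  obtain ⟨s, rfl⟩ := ht
  rw [← LinearMap.comp_apply, rTensor_comp_map]
  refine tsub_mono ?_ ?_ (map_mem_tsub_range _ _ s)
  · rintro y ⟨u, rfl⟩; exact h u.1 u.2
  · rintro y ⟨v, rfl⟩; exact v.2

theorem lTensor_mem_tsub {ψ : N →ₗ[k] N'} {V : Submodule k N} {V' : Submodule k N'}
    (h : ∀ x ∈ V, ψ x ∈ V') {U : Submodule k M} {t : M ⊗[k] N} (ht : t ∈ tsub U V) :
    lTensor M ψ t ∈ tsub U V' := by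
  obtain ⟨s, rfl⟩ := ht
  rw [← LinearMap.comp_apply, lTensor_comp_map]
  refine tsub_mono ?_ ?_ (map_mem_tsub_range _ _ s)
  · rintro y ⟨u, rfl⟩; exact u.2
  · rintro y ⟨v, rfl⟩; exact h v.1 v.2

theorem assoc_tsub_mem {U : Submodule k M} {V : Submodule k N} {W : Submodule k P}
    {t : (M ⊗[k] N) ⊗[k] P} (ht : t ∈ tsub (tsub U V) W) :
    (TensorProduct.assoc k M N P) t ∈ tsub U (tsub V W) := by
  have key : ∀ (a : M ⊗[k] N), a ∈ tsub U V → ∀ w : P, w ∈ W →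
      (TensorProduct.assoc k M N P) (a ⊗ₜ[k] w) ∈ tsub U (tsub V W) := by
    intro a ha w hw
    obtain ⟨s', rfl⟩ := ha
    induction s' with
    | zero => rw [map_zero, TensorProduct.zero_tmul, map_zero]; exact Submodule.zero_mem _
    | add x y hx hy =>
      rw [map_add, TensorProduct.add_tmul, map_add]
      exact Submodule.add_mem _ hx hy
    | tmul u v =>
      rw [TensorProduct.map_tmul, TensorProduct.assoc_tmul]
      exact tmul_mem_tsub u.2 (tmul_mem_tsub v.2 hw)
  obtain ⟨s, rfl⟩ := ht
  induction s with
  | zero => rw [map_zero, map_zero]; exact Submodule.zero_mem _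
  | add x y hx hy => rw [map_add, map_add]; exact Submodule.add_mem _ hx hy
  | tmul a w =>
    rw [TensorProduct.map_tmul]
    exact key _ a.2 _ w.2

theorem lid_map_eq_zero_right {Φ : Module.Dual k M} {Γ : Module.Dual k N}
    {U : Submodule k M} {V : Submodule k N} (hker : ∀ y ∈ V, Γ y = 0)
    {t : M ⊗[k] N} (ht : t ∈ tsub U V) :
    TensorProduct.lid k k (TensorProduct.map Φ Γ t) = 0 := by
  obtain ⟨s, rfl⟩ := ht
  induction s with
  | zero => simp
  | add x y hx hy => simp only [map_add, hx, hy, add_zero]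
  | tmul a b =>
    simp only [TensorProduct.map_tmul, LinearMap.comp_apply]
    have h0 : Γ (V.subtype b) = 0 := hker b.1 b.2
    rw [TensorProduct.lid_tmul, h0, smul_eq_mul, mul_zero]

theorem lid_map_eq_zero_left {Φ : Module.Dual k M} {Γ : Module.Dual k N}
    {U : Submodule k M} {V : Submodule k N} (hker : ∀ y ∈ U, Φ y = 0)
    {t : M ⊗[k] N} (ht : t ∈ tsub U V) :
    TensorProduct.lid k k (TensorProduct.map Φ Γ t) = 0 := by
  obtain ⟨s, rfl⟩ := ht
  induction s with
  | zero => simp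
  | add x y hx hy => simp only [map_add, hx, hy, add_zero]
  | tmul a b =>
    simp only [TensorProduct.map_tmul, LinearMap.comp_apply]
    have h0 : Φ (U.subtype a) = 0 := hker a.1 a.2
    rw [TensorProduct.lid_tmul, h0, smul_eq_mul, zero_mul]

theorem eq_zero_of_dual_apply_eq_zero {t : M ⊗[k] N}
    (h : ∀ (f : Module.Dual k M) (g : Module.Dual k N),
      TensorProduct.lid k k (TensorProduct.map f g t) = 0) : t = 0 := by
  classical
  let bM := Module.Basis.ofVectorSpace k M
  let bN := Module.Basis.ofVectorSpace k N
  let B := bM.tensorProduct bN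
  have hrepr : ∀ (u : M ⊗[k] N) (i : _) (j : _), B.repr u (i, j) =
      TensorProduct.lid k k (TensorProduct.map (bM.coord i) (bN.coord j) u) := by
    intro u i j
    induction u with
    | zero => simp
    | add x y hx hy => simp only [map_add, hx, hy, Finsupp.add_apply]
    | tmul a b =>
      simp only [TensorProduct.map_tmul, TensorProduct.lid_tmul, smul_eq_mul]
      rw [show B.repr (a ⊗ₜ[k] b) (i, j) = bN.repr b j • bM.repr a i from
        Module.Basis.tensorProduct_repr_tmul_apply bM bN a b i j]
      simp [Module.Basis.coord_apply, smul_eq_mul, mul_comm]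
  have hz : B.repr t = 0 := by
    ext p
    obtain ⟨i, j⟩ := p
    rw [hrepr t i j, h]
    rfl
  exact (LinearEquiv.map_eq_zero_iff B.repr).mp hz

end CoradAux

namespace CoradAux

section MoreTsub

variable {k : Type*} [Field k]
variable {M N : Type*} [AddCommGroup M] [Module k M] [AddCommGroup N] [Module k N]

theorem map_zero_on_tsub_left {φ : M →ₗ[k] M} {ψ : N →ₗ[k] N} {U : Submodule k M}
    {V : Submodule k N} (h : φ ∘ₗ U.subtype = 0) {t : M ⊗[k] N} (ht : t ∈ tsub U V) :
    TensorProduct.map φ ψ t = 0 := by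
  rw [← LinearMap.lTensor_comp_rTensor, LinearMap.comp_apply,
    rTensor_zero_on_tsub h ht, map_zero]

theorem map_zero_on_tsub_right {φ : M →ₗ[k] M} {ψ : N →ₗ[k] N} {U : Submodule k M}
    {V : Submodule k N} (h : ψ ∘ₗ V.subtype = 0) {t : M ⊗[k] N} (ht : t ∈ tsub U V) :
    TensorProduct.map φ ψ t = 0 := by
  rw [← LinearMap.rTensor_comp_lTensor, LinearMap.comp_apply,
    lTensor_zero_on_tsub h ht, map_zero]

theorem lTensor_id_on_tsub {ψ : N →ₗ[k] N} {V : Submodule k N} (h : ψ ∘ₗ V.subtype = V.subtype)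
    {U : Submodule k M} {t : M ⊗[k] N} (ht : t ∈ tsub U V) : LinearMap.lTensor M ψ t = t := by
  obtain ⟨s, rfl⟩ := ht
  rw [← LinearMap.comp_apply, lTensor_comp_map, h]

theorem map_id_on_tsub {φ : M →ₗ[k] M} {ψ : N →ₗ[k] N} {U : Submodule k M}
    {V : Submodule k N} (hφ : φ ∘ₗ U.subtype = U.subtype) (hψ : ψ ∘ₗ V.subtype = V.subtype)
    {t : M ⊗[k] N} (ht : t ∈ tsub U V) : TensorProduct.map φ ψ t = t := by
  rw [← LinearMap.lTensor_comp_rTensor, LinearMap.comp_apply, rTensor_id_on_tsub hφ ht,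
    lTensor_id_on_tsub hψ ht]

theorem mem_biSup_induction {V : Type*} [AddCommGroup V] [Module k V] {s : Finset ℕ}
    {f : ℕ → Submodule k V} {t : V} (ht : t ∈ ⨆ c ∈ s, f c) {C : V → Prop}
    (helem : ∀ c ∈ s, ∀ x ∈ f c, C x) (h0 : C 0)
    (hadd : ∀ a b, C a → C b → C (a + b)) : C t := by
  refine Submodule.iSup_induction (motive := C) (fun c => ⨆ _ : c ∈ s, f c) ht
    (fun c x hx => ?_) h0 hadd
  replace hx : x ∈ ⨆ _ : c ∈ s, f c := hx
  by_cases hc : c ∈ s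
  · exact helem c hc x (by rwa [iSup_pos hc] at hx)
  · rw [iSup_neg hc] at hx
    exact (Submodule.mem_bot k |>.mp hx) ▸ h0

theorem mem_biSup_tsub_of_mem_tsub_biSup {s : Finset ℕ} {X : ℕ → Submodule k M}
    {W : Submodule k N} {t : M ⊗[k] N} (ht : t ∈ tsub (⨆ c ∈ s, X c) W) :
    t ∈ ⨆ c ∈ s, tsub (X c) W := by
  obtain ⟨u, rfl⟩ := ht
  induction u with
  | zero => rw [map_zero]; exact Submodule.zero_mem _
  | add x y hx hy => rw [map_add]; exact Submodule.add_mem _ hx hy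
  | tmul a w =>
    rw [TensorProduct.map_tmul]
    refine mem_biSup_induction a.2 (C := fun z => z ⊗ₜ[k] (W.subtype w) ∈ ⨆ c ∈ s, tsub (X c) W)
      ?_ ?_ ?_
    · intro c hc x hx
      exact Submodule.mem_iSup_of_mem c (Submodule.mem_iSup_of_mem hc (tmul_mem_tsub hx w.2))
    · show (0 : M) ⊗ₜ[k] (W.subtype w) ∈ ⨆ c ∈ s, tsub (X c) W
      rw [TensorProduct.zero_tmul]; exact Submodule.zero_mem _
    · intro p q hp hq
      show (p + q) ⊗ₜ[k] (W.subtype w) ∈ ⨆ c ∈ s, tsub (X c) W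
      rw [TensorProduct.add_tmul]
      exact Submodule.add_mem _ hp hq

end MoreTsub

section Wedge

variable {k : Type*} [Field k] {D : Type*} [AddCommGroup D] [Module k D] [Coalgebra k D]

local notation "Δ" => (Coalgebra.comul : D →ₗ[k] D ⊗[k] D)

theorem sup_tsub_eq_ker_comp (X : Submodule k D) {P : Type*} [AddCommGroup P] [Module k P]
    (g : D →ₗ[k] P) :
    tsub X (⊤ : Submodule k D) ⊔ tsub (⊤ : Submodule k D) (LinearMap.ker g) =
      LinearMap.ker (TensorProduct.map X.mkQ g) := by
  rw [ker_map_eq, Submodule.ker_mkQ]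

theorem ker_comp_equiv {M N P : Type*} [AddCommGroup M] [Module k M] [AddCommGroup N]
    [Module k N] [AddCommGroup P] [Module k P] (f : M →ₗ[k] N) (e : N ≃ₗ[k] P) :
    LinearMap.ker (e.toLinearMap ∘ₗ f) = LinearMap.ker f := by
  rw [LinearMap.ker_comp, LinearEquiv.ker, Submodule.comap_bot]

set_option maxHeartbeats 1000000 in
theorem wedge_assoc (X Y Z : Submodule k D) :
    Submodule.comap Δ (tsub X ⊤ ⊔ tsub ⊤ (Submodule.comap Δ (tsub Y ⊤ ⊔ tsub ⊤ Z))) =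
      Submodule.comap Δ (tsub (Submodule.comap Δ (tsub X ⊤ ⊔ tsub ⊤ Y)) ⊤ ⊔ tsub ⊤ Z) := by
  have hYZ : Submodule.comap Δ (tsub Y ⊤ ⊔ tsub ⊤ Z) =
      LinearMap.ker (TensorProduct.map Y.mkQ Z.mkQ ∘ₗ Δ) := by
    calc Submodule.comap Δ (tsub Y ⊤ ⊔ tsub ⊤ Z)
        = Submodule.comap Δ (LinearMap.ker (TensorProduct.map Y.mkQ Z.mkQ)) := by
          rw [sup_tsub_eq_ker]
      _ = LinearMap.ker (TensorProduct.map Y.mkQ Z.mkQ ∘ₗ Δ) := (LinearMap.ker_comp _ _).symm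
  have hXY : Submodule.comap Δ (tsub X ⊤ ⊔ tsub ⊤ Y) =
      LinearMap.ker (TensorProduct.map X.mkQ Y.mkQ ∘ₗ Δ) := by
    calc Submodule.comap Δ (tsub X ⊤ ⊔ tsub ⊤ Y)
        = Submodule.comap Δ (LinearMap.ker (TensorProduct.map X.mkQ Y.mkQ)) := by
          rw [sup_tsub_eq_ker]
      _ = LinearMap.ker (TensorProduct.map X.mkQ Y.mkQ ∘ₗ Δ) := (LinearMap.ker_comp _ _).symm
  have hL : Submodule.comap Δ (tsub X ⊤ ⊔ tsub ⊤
        (LinearMap.ker (TensorProduct.map Y.mkQ Z.mkQ ∘ₗ Δ))) =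
      LinearMap.ker (TensorProduct.map X.mkQ (TensorProduct.map Y.mkQ Z.mkQ ∘ₗ Δ) ∘ₗ Δ) := by
    calc Submodule.comap Δ (tsub X ⊤ ⊔ tsub ⊤
          (LinearMap.ker (TensorProduct.map Y.mkQ Z.mkQ ∘ₗ Δ)))
        = Submodule.comap Δ (LinearMap.ker
            (TensorProduct.map X.mkQ (TensorProduct.map Y.mkQ Z.mkQ ∘ₗ Δ))) := by
          rw [sup_tsub_eq_ker_comp]
      _ = LinearMap.ker (TensorProduct.map X.mkQ (TensorProduct.map Y.mkQ Z.mkQ ∘ₗ Δ) ∘ₗ Δ) :=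
          (LinearMap.ker_comp _ _).symm
  have hR : Submodule.comap Δ (tsub (LinearMap.ker (TensorProduct.map X.mkQ Y.mkQ ∘ₗ Δ)) ⊤ ⊔
        tsub ⊤ Z) =
      LinearMap.ker (TensorProduct.map (TensorProduct.map X.mkQ Y.mkQ ∘ₗ Δ) Z.mkQ ∘ₗ Δ) := by
    have hsup : tsub (LinearMap.ker (TensorProduct.map X.mkQ Y.mkQ ∘ₗ Δ)) (⊤ : Submodule k D) ⊔
        tsub (⊤ : Submodule k D) Z =
        LinearMap.ker (TensorProduct.map (TensorProduct.map X.mkQ Y.mkQ ∘ₗ Δ) Z.mkQ) := by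
      rw [ker_map_eq, Submodule.ker_mkQ]
    calc Submodule.comap Δ (tsub (LinearMap.ker (TensorProduct.map X.mkQ Y.mkQ ∘ₗ Δ)) ⊤ ⊔
          tsub ⊤ Z)
        = Submodule.comap Δ (LinearMap.ker
            (TensorProduct.map (TensorProduct.map X.mkQ Y.mkQ ∘ₗ Δ) Z.mkQ)) := by rw [hsup]
      _ = LinearMap.ker (TensorProduct.map (TensorProduct.map X.mkQ Y.mkQ ∘ₗ Δ) Z.mkQ ∘ₗ Δ) :=
          (LinearMap.ker_comp _ _).symm
  rw [hYZ, hL, hXY, hR]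
  have hnat : ∀ u : (D ⊗[k] D) ⊗[k] D,
      LinearMap.lTensor (D ⧸ X) (TensorProduct.map Y.mkQ Z.mkQ)
        (LinearMap.rTensor (D ⊗[k] D) X.mkQ ((TensorProduct.assoc k D D D) u)) =
      (TensorProduct.assoc k (D ⧸ X) (D ⧸ Y) (D ⧸ Z))
        (LinearMap.rTensor (D ⧸ Z) (TensorProduct.map X.mkQ Y.mkQ)
          (LinearMap.lTensor (D ⊗[k] D) Z.mkQ u)) := by
    intro u
    induction u with
    | zero => simp only [LinearMap.map_zero, LinearEquiv.map_zero]
    | add a b ha hb => simp only [LinearMap.map_add, LinearEquiv.map_add, ha, hb]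
    | tmul a c =>
      induction a with
      | zero =>
        simp only [TensorProduct.zero_tmul, LinearMap.map_zero, LinearEquiv.map_zero]
      | add a b ha hb =>
        simp only [TensorProduct.add_tmul, LinearMap.map_add, LinearEquiv.map_add, ha, hb]
      | tmul a b =>
        simp only [TensorProduct.assoc_tmul, LinearMap.rTensor_tmul, LinearMap.lTensor_tmul,
          TensorProduct.map_tmul]
  have hmapeq : ∀ x : D,
      TensorProduct.map X.mkQ (TensorProduct.map Y.mkQ Z.mkQ ∘ₗ Δ) (Δ x) =
      (TensorProduct.assoc k (D ⧸ X) (D ⧸ Y) (D ⧸ Z))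
        (TensorProduct.map (TensorProduct.map X.mkQ Y.mkQ ∘ₗ Δ) Z.mkQ (Δ x)) := by
    intro x
    have e1 : TensorProduct.map X.mkQ (TensorProduct.map Y.mkQ Z.mkQ ∘ₗ Δ) (Δ x) =
        LinearMap.lTensor (D ⧸ X) (TensorProduct.map Y.mkQ Z.mkQ)
          (LinearMap.rTensor (D ⊗[k] D) X.mkQ (LinearMap.lTensor D Δ (Δ x))) := by
      rw [← LinearMap.comp_apply (LinearMap.rTensor _ X.mkQ), rTensor_comp_lTensor,
        ← LinearMap.comp_apply (LinearMap.lTensor _ _), lTensor_comp_map]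
    have e2 : TensorProduct.map (TensorProduct.map X.mkQ Y.mkQ ∘ₗ Δ) Z.mkQ (Δ x) =
        LinearMap.rTensor (D ⧸ Z) (TensorProduct.map X.mkQ Y.mkQ)
          (LinearMap.lTensor (D ⊗[k] D) Z.mkQ (LinearMap.rTensor D Δ (Δ x))) := by
      rw [← LinearMap.comp_apply (LinearMap.lTensor _ Z.mkQ), lTensor_comp_rTensor,
        ← LinearMap.comp_apply (LinearMap.rTensor _ _), rTensor_comp_map]
    rw [e1, e2, ← Coalgebra.coassoc_apply (R := k) x, hnat]
  apply le_antisymm <;> intro x hx <;>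
    simp only [LinearMap.mem_ker, LinearMap.comp_apply] at hx ⊢
  · rw [hmapeq] at hx
    exact (_root_.map_eq_zero_iff _ (TensorProduct.assoc k (D ⧸ X) (D ⧸ Y) (D ⧸ Z)).injective).mp hx
  · rw [hmapeq, hx, map_zero]

theorem tensorSubmodule_eq (U V : Submodule k D) : tensorSubmodule k U V = tsub U V := rfl

theorem coradFilt_succ_eq (n : ℕ) :
    coradFilt k D (n+1) = Submodule.comap Δ
      (tsub (⊤ : Submodule k D) (coradFilt k D n) ⊔
        tsub (coradFilt k D 0) (⊤ : Submodule k D)) := rfl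

theorem wedge_symm : ∀ n : ℕ, coradFilt k D (n+1) = Submodule.comap Δ
    (tsub (coradFilt k D n) ⊤ ⊔ tsub ⊤ (coradFilt k D 0))
  | 0 => by rw [coradFilt_succ_eq, sup_comm]
  | (n+1) => by
    have hL : Submodule.comap Δ
        (tsub (coradFilt k D 0) ⊤ ⊔ tsub ⊤ (coradFilt k D n)) = coradFilt k D (n+1) := by
      rw [coradFilt_succ_eq, sup_comm]
    rw [coradFilt_succ_eq (n+1), sup_comm, wedge_symm n, wedge_assoc, hL, ← wedge_symm n]

end Wedge

section Decomp

variable {k : Type*} [Field k] {D : Type*} [AddCommGroup D] [Module k D]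
variable (𝒟 : ℕ → Submodule k D) [DirectSum.Decomposition 𝒟]

noncomputable def dproj (i : ℕ) : D →ₗ[k] D :=
  (𝒟 i).subtype ∘ₗ (DirectSum.component k ℕ (fun j => ↥(𝒟 j)) i) ∘ₗ
    (DirectSum.decomposeLinearEquiv 𝒟).toLinearMap

theorem dproj_apply (i : ℕ) (y : D) :
    dproj 𝒟 i y = (DirectSum.decompose 𝒟 y i : D) := rfl

theorem dproj_of_mem {i : ℕ} {y : D} (hy : y ∈ 𝒟 i) : dproj 𝒟 i y = y := by
  rw [dproj_apply, DirectSum.decompose_of_mem_same 𝒟 hy]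

theorem dproj_of_mem_ne {i j : ℕ} {y : D} (hy : y ∈ 𝒟 j) (hij : j ≠ i) : dproj 𝒟 i y = 0 := by
  rw [dproj_apply, DirectSum.decompose_of_mem_ne 𝒟 hy hij]

theorem dproj_mem (i : ℕ) (y : D) : dproj 𝒟 i y ∈ 𝒟 i := (DirectSum.decompose 𝒟 y i).2

theorem exists_sum_dproj (y : D) : ∃ s : Finset ℕ, ∑ i ∈ s, dproj 𝒟 i y = y := by
  classical
  refine ⟨(DirectSum.decompose 𝒟 y).support, ?_⟩
  conv_rhs => rw [← DirectSum.sum_support_decompose 𝒟 y]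
  exact Finset.sum_congr rfl fun i _ => dproj_apply 𝒟 i y

noncomputable def Agr (n : ℕ) : Submodule k D := ⨆ i ∈ Finset.range (n+1), 𝒟 i

theorem le_Agr {i n : ℕ} (h : i ≤ n) : 𝒟 i ≤ Agr 𝒟 n :=
  le_iSup₂_of_le i (Finset.mem_range.mpr (Nat.lt_succ_of_le h)) le_rfl

theorem Agr_zero : Agr 𝒟 0 = 𝒟 0 := by
  apply le_antisymm
  · refine iSup₂_le fun i hi => ?_
    have hi0 : i = 0 := Nat.lt_one_iff.mp (Finset.mem_range.mp hi)
    subst hi0; exact le_rfl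
  · exact le_Agr 𝒟 le_rfl

theorem Agr_one : Agr 𝒟 1 = 𝒟 0 ⊔ 𝒟 1 := by
  apply le_antisymm
  · refine iSup₂_le fun i hi => ?_
    have hi2 : i < 2 := Finset.mem_range.mp hi
    interval_cases i
    · exact le_sup_left
    · exact le_sup_right
  · exact sup_le (le_Agr 𝒟 (by omega)) (le_Agr 𝒟 le_rfl)

theorem dproj_Agr_mem {n : ℕ} (d : ℕ) {y : D} (hy : y ∈ Agr 𝒟 n) : dproj 𝒟 d y ∈ Agr 𝒟 n := by
  refine mem_biSup_induction hy (C := fun z => dproj 𝒟 d z ∈ Agr 𝒟 n) ?_ ?_ ?_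
  · intro c hc x hx
    by_cases hcd : c = d
    · subst hcd
      rw [dproj_of_mem 𝒟 hx]
      exact le_Agr 𝒟 (Nat.lt_succ_iff.mp (Finset.mem_range.mp hc)) hx
    · rw [dproj_of_mem_ne 𝒟 hx hcd]; exact Submodule.zero_mem _
  · show dproj 𝒟 d (0 : D) ∈ Agr 𝒟 n
    rw [map_zero]; exact Submodule.zero_mem _
  · intro a b ha hb
    show dproj 𝒟 d (a + b) ∈ Agr 𝒟 n
    rw [map_add]; exact Submodule.add_mem _ ha hb

theorem dproj_mem_piece {j : ℕ} (c : ℕ) {y : D} (hy : y ∈ 𝒟 j) : dproj 𝒟 c y ∈ 𝒟 j := by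
  by_cases h : j = c
  · subst h; rw [dproj_of_mem 𝒟 hy]; exact hy
  · rw [dproj_of_mem_ne 𝒟 hy h]; exact Submodule.zero_mem _

theorem dproj_zero_of_Agr {n d : ℕ} (hd : n < d) {y : D} (hy : y ∈ Agr 𝒟 n) :
    dproj 𝒟 d y = 0 := by
  refine mem_biSup_induction hy (C := fun z => dproj 𝒟 d z = 0) ?_ (map_zero _) ?_
  · intro c hc x hx
    refine dproj_of_mem_ne 𝒟 hx ?_
    have := Finset.mem_range.mp hc; omega
  · intro a b ha hb
    show dproj 𝒟 d (a + b) = 0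
    rw [map_add, ha, hb, add_zero]

theorem dproj_comp_subtype_self (i : ℕ) : dproj 𝒟 i ∘ₗ (𝒟 i).subtype = (𝒟 i).subtype := by
  ext x; exact dproj_of_mem 𝒟 x.2

theorem dproj_comp_subtype_ne {i j : ℕ} (h : j ≠ i) : dproj 𝒟 i ∘ₗ (𝒟 j).subtype = 0 := by
  ext x; exact dproj_of_mem_ne 𝒟 x.2 h

theorem dproj_comp_subtype_Agr {n c : ℕ} (h : n < c) :
    dproj 𝒟 c ∘ₗ (Agr 𝒟 n).subtype = 0 := by
  ext x; exact dproj_zero_of_Agr 𝒟 h x.2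

theorem Agr_inf_eq_bot {j n : ℕ} (h : n < j) : 𝒟 j ⊓ Agr 𝒟 n = ⊥ := by
  have hInd := (DirectSum.Decomposition.isInternal 𝒟).submodule_iSupIndep
  have hdisj := hInd j
  have hle : Agr 𝒟 n ≤ ⨆ (i) (_ : i ≠ j), 𝒟 i :=
    iSup₂_le fun i hi => le_iSup₂_of_le i (by have := Finset.mem_range.mp hi; omega) le_rfl
  exact disjoint_iff.mp (hdisj.mono_right hle)

theorem eq_zero_of_mem_inf_Agr {j n : ℕ} (h : n < j) {y : D} (hy : y ∈ 𝒟 j)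
    (hy' : y ∈ Agr 𝒟 n) : y = 0 := by
  have hb := Agr_inf_eq_bot 𝒟 h
  have : y ∈ (⊥ : Submodule k D) := hb ▸ Submodule.mem_inf.mpr ⟨hy, hy'⟩
  simpa using this

end Decomp

section GradedCoalg

variable {k : Type*} [Field k] {D : Type*} [AddCommGroup D] [Module k D] [Coalgebra k D]
variable (𝒟 : ℕ → Submodule k D) [DirectSum.Decomposition 𝒟]

local notation "Δ" => (Coalgebra.comul : D →ₗ[k] D ⊗[k] D)

/-- graded comultiplication hypothesis -/
def GradedComul : Prop :=
  ∀ (j : ℕ), ∀ y ∈ 𝒟 j, Coalgebra.comul (R := k) y ∈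
    ⨆ c ∈ Finset.range (j+1), tsub (𝒟 c) (𝒟 (j - c))

theorem sum_map_dproj_self (i : ℕ) {t : D ⊗[k] D}
    (ht : t ∈ ⨆ c ∈ Finset.range (i+1), tsub (𝒟 c) (𝒟 (i - c))) :
    ∑ c ∈ Finset.range (i+1), TensorProduct.map (dproj 𝒟 c) (dproj 𝒟 (i - c)) t = t := by
  refine mem_biSup_induction ht
    (C := fun t => ∑ c ∈ Finset.range (i+1),
      TensorProduct.map (dproj 𝒟 c) (dproj 𝒟 (i - c)) t = t) ?_ ?_ ?_
  · intro c0 hc0 x hx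
    rw [Finset.sum_eq_single c0]
    · exact map_id_on_tsub (dproj_comp_subtype_self 𝒟 c0) (dproj_comp_subtype_self 𝒟 (i - c0)) hx
    · intro c _ hne
      exact map_zero_on_tsub_left (dproj_comp_subtype_ne 𝒟 (Ne.symm hne)) hx
    · intro habs; exact absurd hc0 habs
  · show ∑ c ∈ Finset.range (i+1),
      TensorProduct.map (dproj 𝒟 c) (dproj 𝒟 (i - c)) (0 : D ⊗[k] D) = 0
    simp
  · intro a b ha hb
    show ∑ c ∈ Finset.range (i+1),
      TensorProduct.map (dproj 𝒟 c) (dproj 𝒟 (i - c)) (a + b) = a + b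
    simp only [map_add, Finset.sum_add_distrib, ha, hb]

theorem sum_map_dproj_ne {i j : ℕ} (hij : i ≠ j) {t : D ⊗[k] D}
    (ht : t ∈ ⨆ c ∈ Finset.range (j+1), tsub (𝒟 c) (𝒟 (j - c))) :
    ∑ c ∈ Finset.range (i+1), TensorProduct.map (dproj 𝒟 c) (dproj 𝒟 (i - c)) t = 0 := by
  refine mem_biSup_induction ht
    (C := fun t => ∑ c ∈ Finset.range (i+1),
      TensorProduct.map (dproj 𝒟 c) (dproj 𝒟 (i - c)) t = 0) ?_ ?_ ?_
  · intro c0 hc0 x hx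
    refine Finset.sum_eq_zero fun c hc => ?_
    by_cases hcc : c0 = c
    · subst hcc
      refine map_zero_on_tsub_right (dproj_comp_subtype_ne 𝒟 ?_) hx
      have h1 := Finset.mem_range.mp hc0
      have h2 := Finset.mem_range.mp hc
      omega
    · exact map_zero_on_tsub_left (dproj_comp_subtype_ne 𝒟 hcc) hx
  · show ∑ c ∈ Finset.range (i+1),
      TensorProduct.map (dproj 𝒟 c) (dproj 𝒟 (i - c)) (0 : D ⊗[k] D) = 0
    simp
  · intro a b ha hb
    show ∑ c ∈ Finset.range (i+1),
      TensorProduct.map (dproj 𝒟 c) (dproj 𝒟 (i - c)) (a + b) = 0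
    simp only [map_add, Finset.sum_add_distrib, ha, hb, add_zero]

theorem comul_dproj (hG : GradedComul 𝒟) (i : ℕ) (y : D) :
    Coalgebra.comul (R := k) (dproj 𝒟 i y) =
      ∑ c ∈ Finset.range (i+1),
        TensorProduct.map (dproj 𝒟 c) (dproj 𝒟 (i - c)) (Coalgebra.comul (R := k) y) := by
  have claim : ∀ (j : ℕ) (z : D), z ∈ 𝒟 j →
      Coalgebra.comul (R := k) (dproj 𝒟 i z) =
        ∑ c ∈ Finset.range (i+1),
          TensorProduct.map (dproj 𝒟 c) (dproj 𝒟 (i - c)) (Coalgebra.comul (R := k) z) := by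
    intro j z hz
    by_cases hij : i = j
    · subst hij
      rw [dproj_of_mem 𝒟 hz, sum_map_dproj_self 𝒟 i (hG i z hz)]
    · rw [dproj_of_mem_ne 𝒟 hz (fun h => hij h.symm), map_zero,
        sum_map_dproj_ne 𝒟 hij (hG j z hz)]
  obtain ⟨s, hs⟩ := exists_sum_dproj 𝒟 y
  have h1 : Coalgebra.comul (R := k) (dproj 𝒟 i y) =
      ∑ j ∈ s, Coalgebra.comul (R := k) (dproj 𝒟 i (dproj 𝒟 j y)) := by
    conv_lhs => rw [← hs]
    rw [map_sum, map_sum]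
  have h2 : ∀ c : ℕ,
      TensorProduct.map (dproj 𝒟 c) (dproj 𝒟 (i - c)) (Coalgebra.comul (R := k) y) =
      ∑ j ∈ s, TensorProduct.map (dproj 𝒟 c) (dproj 𝒟 (i - c))
        (Coalgebra.comul (R := k) (dproj 𝒟 j y)) := by
    intro c
    conv_lhs => rw [← hs]
    rw [map_sum, map_sum]
  rw [h1, Finset.sum_congr rfl (fun c _ => h2 c), Finset.sum_comm]
  exact Finset.sum_congr rfl fun j _ => claim j (dproj 𝒟 j y) (dproj_mem 𝒟 j y)

theorem map_dproj_mem_supR {X : Submodule k D}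
    (hX : ∀ d : ℕ, ∀ y ∈ X, dproj 𝒟 d y ∈ X) (c d : ℕ) {t : D ⊗[k] D}
    (ht : t ∈ tsub (⊤ : Submodule k D) X ⊔ tsub (𝒟 0) (⊤ : Submodule k D)) :
    TensorProduct.map (dproj 𝒟 c) (dproj 𝒟 d) t ∈
      tsub (⊤ : Submodule k D) X ⊔ tsub (𝒟 0) (⊤ : Submodule k D) := by
  obtain ⟨t1, h1, t2, h2, rfl⟩ := Submodule.mem_sup.mp ht
  rw [map_add]
  refine Submodule.add_mem _ (Submodule.mem_sup_left ?_) (Submodule.mem_sup_right ?_)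
  · rw [← LinearMap.lTensor_comp_rTensor, LinearMap.comp_apply]
    exact lTensor_mem_tsub (fun y hy => hX d y hy)
      (rTensor_mem_tsub (fun y _ => Submodule.mem_top) h1)
  · rw [← LinearMap.rTensor_comp_lTensor, LinearMap.comp_apply]
    exact rTensor_mem_tsub (fun y hy => dproj_mem_piece 𝒟 c hy)
      (lTensor_mem_tsub (fun y _ => Submodule.mem_top) h2)

theorem map_dproj_mem_supL {X : Submodule k D}
    (hX : ∀ d : ℕ, ∀ y ∈ X, dproj 𝒟 d y ∈ X) (c d : ℕ) {t : D ⊗[k] D}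
    (ht : t ∈ tsub X (⊤ : Submodule k D) ⊔ tsub (⊤ : Submodule k D) (𝒟 0)) :
    TensorProduct.map (dproj 𝒟 c) (dproj 𝒟 d) t ∈
      tsub X (⊤ : Submodule k D) ⊔ tsub (⊤ : Submodule k D) (𝒟 0) := by
  obtain ⟨t1, h1, t2, h2, rfl⟩ := Submodule.mem_sup.mp ht
  rw [map_add]
  refine Submodule.add_mem _ (Submodule.mem_sup_left ?_) (Submodule.mem_sup_right ?_)
  · rw [← LinearMap.lTensor_comp_rTensor, LinearMap.comp_apply]
    exact lTensor_mem_tsub (fun y _ => Submodule.mem_top)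
      (rTensor_mem_tsub (fun y hy => hX c y hy) h1)
  · rw [← LinearMap.rTensor_comp_lTensor, LinearMap.comp_apply]
    exact rTensor_mem_tsub (fun y _ => Submodule.mem_top)
      (lTensor_mem_tsub (fun y hy => dproj_mem_piece 𝒟 d hy) h2)

theorem Agr_le_coradFilt (hG : GradedComul 𝒟) (h0 : coradFilt k D 0 = 𝒟 0) :
    ∀ n, Agr 𝒟 n ≤ coradFilt k D n := by
  intro n
  induction n with
  | zero => rw [Agr_zero, h0]
  | succ n IH =>
    refine iSup₂_le fun i hi => ?_
    intro y hy
    rw [coradFilt_succ_eq]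
    simp only [Submodule.mem_comap]
    have hi' : i ≤ n + 1 := Nat.lt_succ_iff.mp (Finset.mem_range.mp hi)
    refine mem_biSup_induction (hG i y hy)
      (C := fun t => t ∈ tsub (⊤ : Submodule k D) (coradFilt k D n) ⊔
        tsub (coradFilt k D 0) (⊤ : Submodule k D)) ?_ (Submodule.zero_mem _)
      (fun a b ha hb => Submodule.add_mem _ ha hb)
    intro c hc t ht
    by_cases hc0 : c = 0
    · subst hc0
      exact Submodule.mem_sup_right (tsub_mono (le_of_eq h0.symm) le_top ht)
    · refine Submodule.mem_sup_left (tsub_mono le_top ?_ ht)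
      have hcc := Finset.mem_range.mp hc
      exact le_trans (le_Agr 𝒟 (show i - c ≤ n by omega)) IH

set_option maxHeartbeats 2000000 in
theorem coradFilt_eq_Agr (hG : GradedComul 𝒟)
    (h0 : coradFilt k D 0 = 𝒟 0) (h1 : coradFilt k D 1 = 𝒟 0 ⊔ 𝒟 1) :
    ∀ n, coradFilt k D n = Agr 𝒟 n := by
  intro n
  induction n using Nat.strong_induction_on with
  | _ n IH =>
  rcases n with _ | _ | n
  · rw [h0, Agr_zero]
  · rw [h1, Agr_one]
  refine le_antisymm ?_ (Agr_le_coradFilt 𝒟 hG h0 _)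
  intro x hx
  have hS : Coalgebra.comul (R := k) x ∈
      tsub (⊤ : Submodule k D) (Agr 𝒟 (n+1)) ⊔ tsub (𝒟 0) (⊤ : Submodule k D) := by
    have h := hx
    rw [coradFilt_succ_eq] at h
    simp only [Submodule.mem_comap] at h
    rwa [IH (n+1) (by omega), h0] at h
  have hS' : Coalgebra.comul (R := k) x ∈
      tsub (Agr 𝒟 (n+1)) (⊤ : Submodule k D) ⊔ tsub (⊤ : Submodule k D) (𝒟 0) := by
    have h := hx
    rw [wedge_symm (n+1)] at h
    simp only [Submodule.mem_comap] at h
    rwa [IH (n+1) (by omega), h0] at h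
  obtain ⟨s, hs⟩ := exists_sum_dproj 𝒟 x
  rw [← hs]
  refine Submodule.sum_mem _ fun i _ => ?_
  by_cases hi : i ≤ n + 2
  · exact le_Agr 𝒟 hi (dproj_mem 𝒟 i x)
  push_neg at hi
  suffices hzero : dproj 𝒟 i x = 0 by rw [hzero]; exact Submodule.zero_mem _
  have hxiD : dproj 𝒟 i x ∈ 𝒟 i := dproj_mem 𝒟 i x
  set xi := dproj 𝒟 i x with hxidef
  have hSxi : Coalgebra.comul (R := k) xi ∈
      tsub (⊤ : Submodule k D) (Agr 𝒟 (n+1)) ⊔ tsub (𝒟 0) (⊤ : Submodule k D) := by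
    rw [hxidef, comul_dproj 𝒟 hG i x]
    exact Submodule.sum_mem _ fun c _ =>
      map_dproj_mem_supR 𝒟 (fun d y hy => dproj_Agr_mem 𝒟 d hy) c (i - c) hS
  have hS'xi : Coalgebra.comul (R := k) xi ∈
      tsub (Agr 𝒟 (n+1)) (⊤ : Submodule k D) ⊔ tsub (⊤ : Submodule k D) (𝒟 0) := by
    rw [hxidef, comul_dproj 𝒟 hG i x]
    exact Submodule.sum_mem _ fun c _ =>
      map_dproj_mem_supL 𝒟 (fun d y hy => dproj_Agr_mem 𝒟 d hy) c (i - c) hS'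
  set w : ℕ → D ⊗[k] D :=
    fun c => LinearMap.rTensor D (dproj 𝒟 c) (Coalgebra.comul (R := k) xi) with hwdef
  have hwapp : ∀ c, w c = LinearMap.rTensor D (dproj 𝒟 c) (Coalgebra.comul (R := k) xi) :=
    fun c => rfl
  have hwmem : ∀ c, c ≤ i → w c ∈ tsub (𝒟 c) (𝒟 (i - c)) := by
    intro c _
    rw [hwapp c]
    refine mem_biSup_induction (hG i xi hxiD)
      (C := fun t => LinearMap.rTensor D (dproj 𝒟 c) t ∈ tsub (𝒟 c) (𝒟 (i - c))) ?_ ?_ ?_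
    · intro c0 _ t ht
      by_cases hcc : c0 = c
      · subst hcc
        exact rTensor_mem_tsub (fun y hy => by rw [dproj_of_mem 𝒟 hy]; exact hy) ht
      · rw [rTensor_zero_on_tsub (dproj_comp_subtype_ne 𝒟 hcc) ht]
        exact Submodule.zero_mem _
    · show LinearMap.rTensor D (dproj 𝒟 c) (0 : D ⊗[k] D) ∈ _
      rw [map_zero]; exact Submodule.zero_mem _
    · intro a b ha hb
      show LinearMap.rTensor D (dproj 𝒟 c) (a + b) ∈ _
      rw [map_add]; exact Submodule.add_mem _ ha hb
  have hwsum : ∑ c ∈ Finset.range (i+1), w c = Coalgebra.comul (R := k) xi := by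
    refine mem_biSup_induction (hG i xi hxiD)
      (C := fun t => ∑ c ∈ Finset.range (i+1), LinearMap.rTensor D (dproj 𝒟 c) t = t)
      ?_ ?_ ?_
    · intro c0 hc0 t ht
      rw [Finset.sum_eq_single c0]
      · exact rTensor_id_on_tsub (dproj_comp_subtype_self 𝒟 c0) ht
      · intro c _ hne
        rw [rTensor_zero_on_tsub (dproj_comp_subtype_ne 𝒟 (Ne.symm hne)) ht]
      · intro habs; exact absurd hc0 habs
    · show ∑ c ∈ Finset.range (i+1), LinearMap.rTensor D (dproj 𝒟 c) (0 : D ⊗[k] D) = 0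
      simp
    · intro a b ha hb
      show ∑ c ∈ Finset.range (i+1), LinearMap.rTensor D (dproj 𝒟 c) (a + b) = a + b
      simp only [map_add, Finset.sum_add_distrib, ha, hb]
  have hw3 : ∀ c, 1 ≤ c → n + 1 < i - c → w c = 0 := by
    intro c hc1 hcn
    obtain ⟨t1, h1t, t2, h2t, heq⟩ := Submodule.mem_sup.mp hSxi
    have e2 : LinearMap.rTensor D (dproj 𝒟 c) t2 = 0 :=
      rTensor_zero_on_tsub (dproj_comp_subtype_ne 𝒟 (by omega)) h2t
    have hwc1 : w c = LinearMap.rTensor D (dproj 𝒟 c) t1 := by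
      rw [hwapp c, ← heq, map_add, e2, add_zero]
    have hwc : w c ∈ tsub (⊤ : Submodule k D) (Agr 𝒟 (n+1)) := by
      rw [hwc1]
      exact rTensor_mem_tsub (fun y _ => Submodule.mem_top) h1t
    have hwc2 : w c ∈ tsub (⊤ : Submodule k D) (𝒟 (i - c)) :=
      tsub_mono le_top le_rfl (hwmem c (by omega))
    have hbot : w c ∈ tsub (⊤ : Submodule k D) (Agr 𝒟 (n+1) ⊓ 𝒟 (i - c)) := by
      rw [← inf_tsub_left]; exact ⟨hwc, hwc2⟩
    rw [show Agr 𝒟 (n+1) ⊓ 𝒟 (i - c) = ⊥ from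
      by rw [inf_comm]; exact Agr_inf_eq_bot 𝒟 hcn, tsub_bot_right] at hbot
    simpa using hbot
  have hw4 : ∀ c, n + 1 < c → 1 ≤ i - c → w c = 0 := by
    intro c hcn hci
    obtain ⟨t1, h1t, t2, h2t, heq⟩ := Submodule.mem_sup.mp hS'xi
    have e1 : LinearMap.rTensor D (dproj 𝒟 c) t1 = 0 :=
      rTensor_zero_on_tsub (dproj_comp_subtype_Agr 𝒟 hcn) h1t
    have hwc1 : w c = LinearMap.rTensor D (dproj 𝒟 c) t2 := by
      rw [hwapp c, ← heq, map_add, e1, zero_add]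
    have hwc : w c ∈ tsub (⊤ : Submodule k D) (𝒟 0) := by
      rw [hwc1]
      exact rTensor_mem_tsub (fun y _ => Submodule.mem_top) h2t
    have hwc2 : w c ∈ tsub (⊤ : Submodule k D) (𝒟 (i - c)) :=
      tsub_mono le_top le_rfl (hwmem c (by omega))
    have hbot : w c ∈ tsub (⊤ : Submodule k D) ((𝒟 0) ⊓ 𝒟 (i - c)) := by
      rw [← inf_tsub_left]; exact ⟨hwc, hwc2⟩
    rw [show (𝒟 0) ⊓ 𝒟 (i - c) = ⊥ from by
      rw [inf_comm, ← Agr_zero 𝒟]; exact Agr_inf_eq_bot 𝒟 (by omega), tsub_bot_right] at hbot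
    simpa using hbot
  have hwT : ∀ c0, 1 ≤ c0 → i - c0 = n + 1 → c0 ≤ n + 1 → w c0 = 0 := by
    intro c0 hc01 hic hc0n
    have hc02 : 2 ≤ c0 := by omega
    obtain ⟨n', rfl⟩ : ∃ n', n = n' + 1 := ⟨n - 1, by omega⟩
    set W : Submodule k (D ⊗[k] D) :=
      tsub (Agr 𝒟 n') (⊤ : Submodule k D) ⊔ tsub (⊤ : Submodule k D) (𝒟 0) with hWdef
    have hθ : LinearMap.lTensor D Δ (w c0) ∈ tsub (⊤ : Submodule k D) W := by
      have hcomm : LinearMap.lTensor D Δ (w c0) =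
          LinearMap.rTensor (D ⊗[k] D) (dproj 𝒟 c0)
            (LinearMap.lTensor D Δ (Coalgebra.comul (R := k) xi)) := by
        rw [hwapp c0, ← LinearMap.comp_apply, LinearMap.lTensor_comp_rTensor,
          ← LinearMap.rTensor_comp_lTensor, LinearMap.comp_apply]
      have hco : LinearMap.lTensor D Δ (Coalgebra.comul (R := k) xi) =
          (TensorProduct.assoc k D D D)
            (LinearMap.rTensor D Δ (Coalgebra.comul (R := k) xi)) :=
        (Coalgebra.coassoc_apply (R := k) xi).symm
      rw [hcomm, hco, ← hwsum, map_sum, map_sum, map_sum]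
      refine Submodule.sum_mem _ fun c hc => ?_
      by_cases hwz : w c = 0
      · rw [hwz, map_zero, LinearEquiv.map_zero, map_zero]; exact Submodule.zero_mem _
      have hci : c ≤ i := Nat.lt_succ_iff.mp (Finset.mem_range.mp hc)
      have hcase : c ≤ n' + 2 ∨ c = i := by
        by_contra hcon
        push_neg at hcon
        exact hwz (hw4 c (by omega) (by omega))
      have hstep : LinearMap.rTensor D Δ (w c) ∈
          ⨆ e ∈ Finset.range (c+1), tsub (tsub (𝒟 e) (𝒟 (c - e))) (𝒟 (i - c)) := by
        have hmem : LinearMap.rTensor D Δ (w c) ∈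
            tsub (⨆ e ∈ Finset.range (c+1), tsub (𝒟 e) (𝒟 (c - e))) (𝒟 (i - c)) :=
          rTensor_mem_tsub (fun u hu => hG c u hu) (hwmem c hci)
        exact mem_biSup_tsub_of_mem_tsub_biSup hmem
      refine mem_biSup_induction hstep
        (C := fun t => LinearMap.rTensor (D ⊗[k] D) (dproj 𝒟 c0)
          ((TensorProduct.assoc k D D D) t) ∈ tsub (⊤ : Submodule k D) W) ?_ ?_ ?_
      · intro e _ t ht
        show LinearMap.rTensor (D ⊗[k] D) (dproj 𝒟 c0)
          ((TensorProduct.assoc k D D D) t) ∈ tsub (⊤ : Submodule k D) W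
        have hassoc := assoc_tsub_mem ht
        by_cases hec : e = c0
        · subst hec
          have hmem2 := rTensor_mem_tsub
            (fun y (hy : y ∈ 𝒟 e) => by rw [dproj_of_mem 𝒟 hy]; exact hy) hassoc
          refine tsub_mono le_top ?_ hmem2
          rcases hcase with hcle | rfl
          · calc tsub (𝒟 (c - e)) (𝒟 (i - c))
                ≤ tsub (Agr 𝒟 n') (⊤ : Submodule k D) :=
                  tsub_mono (le_Agr 𝒟 (by omega)) le_top
              _ ≤ W := le_sup_left
          · calc tsub (𝒟 (c - e)) (𝒟 (c - c))
                ≤ tsub (⊤ : Submodule k D) (𝒟 0) := by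
                  rw [Nat.sub_self]; exact tsub_mono le_top le_rfl
              _ ≤ W := le_sup_right
        · rw [rTensor_zero_on_tsub (dproj_comp_subtype_ne 𝒟 hec) hassoc]
          exact Submodule.zero_mem _
      · show LinearMap.rTensor (D ⊗[k] D) (dproj 𝒟 c0)
          ((TensorProduct.assoc k D D D) (0 : (D ⊗[k] D) ⊗[k] D)) ∈ tsub (⊤ : Submodule k D) W
        rw [LinearEquiv.map_zero, map_zero]; exact Submodule.zero_mem _
      · intro a b ha hb
        show LinearMap.rTensor (D ⊗[k] D) (dproj 𝒟 c0)
          ((TensorProduct.assoc k D D D) (a + b)) ∈ tsub (⊤ : Submodule k D) W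
        rw [LinearEquiv.map_add, map_add]; exact Submodule.add_mem _ ha hb
    have hKW : Submodule.comap Δ W = coradFilt k D (n' + 1) := by
      rw [hWdef, show Agr 𝒟 n' = coradFilt k D n' from (IH n' (by omega)).symm,
        show 𝒟 0 = coradFilt k D 0 from h0.symm, ← wedge_symm n']
    have hT1 : w c0 ∈ tsub (⊤ : Submodule k D) (Submodule.comap Δ W) := by
      have hmem : w c0 ∈
          Submodule.comap (LinearMap.lTensor D Δ) (tsub (⊤ : Submodule k D) W) := hθ
      rwa [comap_lTensor_tsub] at hmem
    rw [hKW, IH (n'+1) (by omega)] at hT1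
    have hT2 : w c0 ∈ tsub (⊤ : Submodule k D) (𝒟 (n' + 1 + 1)) := by
      have hmem := tsub_mono le_top le_rfl (hwmem c0 (by omega))
      rwa [hic] at hmem
    have hbot : w c0 ∈ tsub (⊤ : Submodule k D) (Agr 𝒟 (n'+1) ⊓ 𝒟 (n'+1+1)) := by
      rw [← inf_tsub_left]; exact ⟨hT1, hT2⟩
    rw [show Agr 𝒟 (n'+1) ⊓ 𝒟 (n'+1+1) = ⊥ from by
      rw [inf_comm]; exact Agr_inf_eq_bot 𝒟 (by omega), tsub_bot_right] at hbot
    simpa using hbot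
  have hxiK : xi ∈ coradFilt k D (n+1) := by
    rw [coradFilt_succ_eq]
    simp only [Submodule.mem_comap]
    rw [IH n (by omega), h0, ← hwsum]
    refine Submodule.sum_mem _ fun c hc => ?_
    have hci : c ≤ i := Nat.lt_succ_iff.mp (Finset.mem_range.mp hc)
    by_cases hc0 : c = 0
    · subst hc0
      exact Submodule.mem_sup_right (tsub_mono le_rfl le_top (hwmem 0 (by omega)))
    · by_cases hsmall : i - c ≤ n
      · exact Submodule.mem_sup_left (tsub_mono le_top (le_Agr 𝒟 hsmall) (hwmem c hci))
      · push_neg at hsmall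
        by_cases hmid : i - c = n + 1
        · by_cases hcn : c ≤ n + 1
          · rw [hwT c (by omega) hmid hcn]; exact Submodule.zero_mem _
          · rw [hw4 c (by omega) (by omega)]; exact Submodule.zero_mem _
        · rw [hw3 c (by omega) (by omega)]; exact Submodule.zero_mem _
  rw [IH (n+1) (by omega)] at hxiK
  exact eq_zero_of_mem_inf_Agr 𝒟 (by omega) hxiD hxiK

end GradedCoalg

end CoradAux

namespace CoradAux

section Step

variable {k : Type*} [Field k]
variable {C : Type*} [AddCommGroup C] [Module k C] [Coalgebra k C]
variable {D : Type*} [AddCommGroup D] [Module k D] [Coalgebra k D]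

theorem step_down (F : ℕ → Submodule k C) (hmono : Monotone F)
    (𝒟 : ℕ → Submodule k D) [DirectSum.Decomposition 𝒟]
    (e : ∀ n : ℕ, filtPiece F n ≃ₗ[k] ↥(𝒟 n))
    (hcomul : ∀ (n : ℕ) (x : C) (hx : x ∈ F n),
      ∃ (s : Finset ℕ) (d : ℕ → ℕ) (a b : ℕ → C)
        (ha : ∀ j : ℕ, a j ∈ F (d j)) (hb : ∀ j : ℕ, b j ∈ F (n - d j)),
        (∀ j ∈ s, d j ≤ n) ∧
        Coalgebra.comul (R := k) x = ∑ j ∈ s, a j ⊗ₜ[k] b j ∧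
        Coalgebra.comul (R := k) ((e n (Submodule.Quotient.mk ⟨x, hx⟩) : ↥(𝒟 n)) : D) =
          ∑ j ∈ s, ((e (d j) (Submodule.Quotient.mk ⟨a j, ha j⟩) : ↥(𝒟 (d j))) : D) ⊗ₜ[k]
            ((e (n - d j) (Submodule.Quotient.mk ⟨b j, hb j⟩) : ↥(𝒟 (n - d j))) : D))
    (hKA : ∀ j, coradFilt k D j = Agr 𝒟 j)
    {n m : ℕ} (hm : n + 2 ≤ m + 1) {y : C} (hym : y ∈ F (m + 1))
    (hyS : Coalgebra.comul (R := k) y ∈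
      tsub (⊤ : Submodule k C) (F n) ⊔ tsub (F 0) (⊤ : Submodule k C)) :
    y ∈ F m := by
  classical
  obtain ⟨s, d, a, b, ha, hb, hdle, hΔC, hΔD⟩ := hcomul (m + 1) y hym
  -- the evaluation functionals
  have e_coe_congr : ∀ {c1 c2 : ℕ} (_ : c1 = c2) (z : C) (h1 : z ∈ F c1) (h2 : z ∈ F c2),
      ((e c1 (Submodule.Quotient.mk ⟨z, h1⟩) : ↥(𝒟 c1)) : D) =
        ((e c2 (Submodule.Quotient.mk ⟨z, h2⟩) : ↥(𝒟 c2)) : D) := by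
    intro c1 c2 h z h1 h2
    subst h
    rfl
  -- the middle fiber sums vanish
  have claim : ∀ c : ℕ, 1 ≤ c → c ≤ m + 1 - (n + 1) →
      ∑ j ∈ s.filter (fun j => d j = c),
        ((e (d j) (Submodule.Quotient.mk ⟨a j, ha j⟩) : ↥(𝒟 (d j))) : D) ⊗ₜ[k]
          ((e (m + 1 - d j) (Submodule.Quotient.mk ⟨b j, hb j⟩) : ↥(𝒟 (m + 1 - d j))) : D)
        = 0 := by
    intro c hc1 hcm
    obtain ⟨c', rfl⟩ : ∃ c', c = c' + 1 := ⟨c - 1, by omega⟩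
    set c := c' + 1
    set mc := m + 1 - c with hmc
    obtain ⟨mc', hmc'⟩ : ∃ mc', mc = mc' + 1 := ⟨mc - 1, by omega⟩
    have hnmc : n ≤ mc' := by omega
    apply eq_zero_of_dual_apply_eq_zero
    intro f g
    -- construct Φ
    obtain ⟨π, hπ⟩ := (F c).subtype.exists_leftInverse_of_injective (Submodule.ker_subtype _)
    set Φ : C →ₗ[k] k := f ∘ₗ (𝒟 c).subtype ∘ₗ (e c).toLinearMap ∘ₗ
      (Submodule.comap (F c).subtype (filtPred F c)).mkQ ∘ₗ π with hΦdef
    have hΦ : ∀ (z : C) (hz : z ∈ F c),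
        Φ z = f ((e c (Submodule.Quotient.mk ⟨z, hz⟩) : ↥(𝒟 c)) : D) := by
      intro z hz
      have hπz : π z = ⟨z, hz⟩ := by
        have := LinearMap.congr_fun hπ ⟨z, hz⟩
        simpa using this
      rw [hΦdef]
      simp only [LinearMap.comp_apply, hπz]
      rfl
    have hΦ0 : ∀ z : C, z ∈ F c' → Φ z = 0 := by
      intro z hz
      have hzc : z ∈ F c := hmono (by omega) hz
      rw [hΦ z hzc]
      have hq : (Submodule.Quotient.mk (⟨z, hzc⟩ : ↥(F c)) :
          ↥(F c) ⧸ Submodule.comap (F c).subtype (filtPred F c)) = 0 := by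
        rw [Submodule.Quotient.mk_eq_zero]
        exact hz
      rw [hq, map_zero, ZeroMemClass.coe_zero, map_zero]
    -- construct Γ
    obtain ⟨π2, hπ2⟩ := (F mc).subtype.exists_leftInverse_of_injective (Submodule.ker_subtype _)
    set Γ : C →ₗ[k] k := g ∘ₗ (𝒟 mc).subtype ∘ₗ (e mc).toLinearMap ∘ₗ
      (Submodule.comap (F mc).subtype (filtPred F mc)).mkQ ∘ₗ π2 with hΓdef
    have hΓ : ∀ (z : C) (hz : z ∈ F mc),
        Γ z = g ((e mc (Submodule.Quotient.mk ⟨z, hz⟩) : ↥(𝒟 mc)) : D) := by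
      intro z hz
      have hπz : π2 z = ⟨z, hz⟩ := by
        have := LinearMap.congr_fun hπ2 ⟨z, hz⟩
        simpa using this
      rw [hΓdef]
      simp only [LinearMap.comp_apply, hπz]
      rfl
    have hΓ0 : ∀ z : C, z ∈ F mc' → Γ z = 0 := by
      intro z hz
      have hzc : z ∈ F mc := hmono (by omega) hz
      rw [hΓ z hzc]
      have hq : (Submodule.Quotient.mk (⟨z, hzc⟩ : ↥(F mc)) :
          ↥(F mc) ⧸ Submodule.comap (F mc).subtype (filtPred F mc)) = 0 := by
        rw [Submodule.Quotient.mk_eq_zero]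
        show z ∈ filtPred F mc
        rw [hmc']
        exact hz
      rw [hq, map_zero, ZeroMemClass.coe_zero, map_zero]
    -- the pairing kills comul y
    have hzero : TensorProduct.lid k k (TensorProduct.map Φ Γ (Coalgebra.comul (R := k) y))
        = 0 := by
      obtain ⟨t1, h1t, t2, h2t, heq⟩ := Submodule.mem_sup.mp hyS
      rw [← heq, map_add, map_add]
      rw [lid_map_eq_zero_right (fun z hz => hΓ0 z (hmono hnmc hz)) h1t,
        lid_map_eq_zero_left (fun z hz => hΦ0 z (hmono (by omega) hz)) h2t, add_zero]
    -- expand comul y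
    have hexp : TensorProduct.lid k k (TensorProduct.map Φ Γ (Coalgebra.comul (R := k) y)) =
        ∑ j ∈ s, Φ (a j) * Γ (b j) := by
      rw [hΔC, map_sum, map_sum]
      exact Finset.sum_congr rfl fun j _ => by
        rw [TensorProduct.map_tmul, TensorProduct.lid_tmul, smul_eq_mul]
    -- restrict the sum to the fiber
    have hfiber : ∑ j ∈ s, Φ (a j) * Γ (b j) =
        ∑ j ∈ s.filter (fun j => d j = c), Φ (a j) * Γ (b j) := by
      rw [Finset.sum_filter_of_ne]
      intro j _ hne
      by_contra hdj
      rcases lt_trichotomy (d j) c with hlt | heqc | hgt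
      · exact hne (by rw [hΦ0 (a j) (hmono (by omega : d j ≤ c') (ha j))]; ring)
      · exact hdj heqc
      · refine hne ?_
        have hbj : b j ∈ F mc' := hmono (by omega : m + 1 - d j ≤ mc') (hb j)
        rw [hΓ0 (b j) hbj]
        ring
    -- identify fiber terms
    have hterm : ∀ j ∈ s.filter (fun j => d j = c), Φ (a j) * Γ (b j) =
        TensorProduct.lid k k (TensorProduct.map f g
          (((e (d j) (Submodule.Quotient.mk ⟨a j, ha j⟩) : ↥(𝒟 (d j))) : D) ⊗ₜ[k]
            ((e (m + 1 - d j) (Submodule.Quotient.mk ⟨b j, hb j⟩) :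
              ↥(𝒟 (m + 1 - d j))) : D))) := by
      intro j hj
      have hdj : d j = c := (Finset.mem_filter.mp hj).2
      have haj : a j ∈ F c := hdj ▸ ha j
      have hbj : b j ∈ F mc := by
        have := hb j
        rwa [hdj] at this
      rw [TensorProduct.map_tmul, TensorProduct.lid_tmul, smul_eq_mul, hΦ (a j) haj,
        hΓ (b j) hbj, e_coe_congr hdj.symm (a j) haj (ha j),
        e_coe_congr (show mc = m + 1 - d j from by rw [hdj]) (b j) hbj (hb j)]
    rw [map_sum, map_sum, ← Finset.sum_congr rfl hterm, ← hfiber, ← hexp, hzero]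
  -- now show the image of y in 𝒟 (m+1) vanishes
  set ybar : D := ((e (m + 1) (Submodule.Quotient.mk ⟨y, hym⟩) : ↥(𝒟 (m + 1))) : D) with hybar
  have hybarmem : ybar ∈ 𝒟 (m + 1) := SetLike.coe_mem _
  have hybarK : ybar ∈ coradFilt k D (n + 1) := by
    rw [coradFilt_succ_eq]
    simp only [Submodule.mem_comap]
    rw [hKA n, show coradFilt k D 0 = Agr 𝒟 0 from hKA 0, Agr_zero]
    rw [show Coalgebra.comul (R := k) ybar = _ from hΔD]
    -- split the sum
    rw [← Finset.sum_filter_add_sum_filter_not s (fun j => d j = 0)]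
    refine Submodule.add_mem _ (Submodule.mem_sup_right ?_) ?_
    · refine Submodule.sum_mem _ fun j hj => ?_
      have hdj : d j = 0 := (Finset.mem_filter.mp hj).2
      refine tmul_mem_tsub ?_ Submodule.mem_top
      have haj0 : a j ∈ F 0 := hdj ▸ ha j
      rw [e_coe_congr hdj (a j) (ha j) haj0]
      exact SetLike.coe_mem _
    · rw [← Finset.sum_filter_add_sum_filter_not (s.filter (fun j => ¬ d j = 0))
        (fun j => m + 1 - d j ≤ n)]
      refine Submodule.add_mem _ (Submodule.mem_sup_left ?_) ?_
      · refine Submodule.sum_mem _ fun j hj => ?_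
        have hdj : m + 1 - d j ≤ n := (Finset.mem_filter.mp hj).2
        refine tmul_mem_tsub Submodule.mem_top ?_
        exact le_Agr 𝒟 hdj (SetLike.coe_mem _)
      · -- the middle part is zero
        have hmaps : ∀ j ∈ (s.filter (fun j => ¬ d j = 0)).filter
            (fun j => ¬ m + 1 - d j ≤ n), d j ∈ Finset.Icc 1 (m + 1 - (n + 1)) := by
          intro j hj
          have h1 := (Finset.mem_filter.mp (Finset.mem_filter.mp hj).1).2
          have h2 := (Finset.mem_filter.mp hj).2
          simp only [Finset.mem_Icc]
          omega
        rw [← Finset.sum_fiberwise_of_maps_to hmaps]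
        refine Submodule.sum_mem _ fun c hc => ?_
        have hcIcc := Finset.mem_Icc.mp hc
        have hfeq : ((s.filter (fun j => ¬ d j = 0)).filter
            (fun j => ¬ m + 1 - d j ≤ n)).filter (fun j => d j = c) =
            s.filter (fun j => d j = c) := by
          rw [Finset.filter_filter, Finset.filter_filter]
          refine Finset.filter_congr fun j _ => ?_
          constructor
          · rintro ⟨_, _, h⟩; exact h
          · intro h; exact ⟨by omega, by omega, h⟩
        rw [hfeq, claim c (by omega) (by omega)]
        exact Submodule.zero_mem _
  rw [hKA (n + 1)] at hybarK
  have hy0 : ybar = 0 := eq_zero_of_mem_inf_Agr 𝒟 (by omega) hybarmem hybarK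
  have hq0 : (Submodule.Quotient.mk (⟨y, hym⟩ : ↥(F (m + 1))) :
      filtPiece F (m + 1)) = 0 := by
    have : (e (m + 1) (Submodule.Quotient.mk ⟨y, hym⟩) : ↥(𝒟 (m + 1))) = 0 := by
      exact Subtype.ext hy0
    exact (LinearEquiv.map_eq_zero_iff (e (m + 1))).mp this
  rw [Submodule.Quotient.mk_eq_zero] at hq0
  exact hq0

end Step

end CoradAux

/-- Let `C` be a coalgebra with an exhaustive coalgebra filtration
`{F_n}` with `F 0 = C₀` (the coradical).  If the associated graded coalgebra `gr_F C`
(realized as a coalgebra `D` with a decomposition `𝒟` and compatible linear isomorphisms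
`F n / F (n-1) ≃ 𝒟 n`) is coradically graded, then `{F_n}` is the coradical filtration
of `C`. -/
theorem filtration_eq_coradFilt_of_gr_coradically_graded (k : Type*) [Field k]
    (C : Type*) [AddCommGroup C] [Module k C] [Coalgebra k C]
    (F : ℕ → Submodule k C) (hmono : Monotone F) (hexh : ⨆ n, F n = ⊤)
    (hcoalgfilt : ∀ n : ℕ, ∀ x ∈ F n, Coalgebra.comul (R := k) x ∈
      ⨆ i ∈ Finset.range (n + 1), tensorSubmodule k (F i) (F (n - i)))
    (hF0 : F 0 = coradical k C)
    (D : Type*) [AddCommGroup D] [Module k D] [Coalgebra k D]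
    (𝒟 : ℕ → Submodule k D) [DirectSum.Decomposition 𝒟]
    (e : ∀ n : ℕ, filtPiece F n ≃ₗ[k] ↥(𝒟 n))
    (hcomul : ∀ (n : ℕ) (x : C) (hx : x ∈ F n),
      ∃ (s : Finset ℕ) (d : ℕ → ℕ) (a b : ℕ → C)
        (ha : ∀ j : ℕ, a j ∈ F (d j)) (hb : ∀ j : ℕ, b j ∈ F (n - d j)),
        (∀ j ∈ s, d j ≤ n) ∧
        Coalgebra.comul (R := k) x = ∑ j ∈ s, a j ⊗ₜ[k] b j ∧
        Coalgebra.comul (R := k) ((e n (Submodule.Quotient.mk ⟨x, hx⟩) : ↥(𝒟 n)) : D) =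
          ∑ j ∈ s, ((e (d j) (Submodule.Quotient.mk ⟨a j, ha j⟩) : ↥(𝒟 (d j))) : D) ⊗ₜ[k]
            ((e (n - d j) (Submodule.Quotient.mk ⟨b j, hb j⟩) : ↥(𝒟 (n - d j))) : D))
    (hcoradgraded : coradFilt k D 0 = 𝒟 0 ∧ coradFilt k D 1 = 𝒟 0 ⊔ 𝒟 1) :
    ∀ n : ℕ, F n = coradFilt k C n := by
  have hGD : CoradAux.GradedComul 𝒟 := by
    intro j y hy
    obtain ⟨q, hq⟩ := (e j).surjective ⟨y, hy⟩
    obtain ⟨z, hz⟩ := Submodule.Quotient.mk_surjective _ q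
    obtain ⟨s, d, a, b, ha, hb, hdle, _, hΔD⟩ := hcomul j z.1 z.2
    have hyq : ((e j (Submodule.Quotient.mk ⟨z.1, z.2⟩) : ↥(𝒟 j)) : D) = y := by
      have hmk : Submodule.Quotient.mk (⟨z.1, z.2⟩ : ↥(F j)) = q := by rw [← hz]
      rw [hmk, hq]
    rw [← hyq, hΔD]
    refine Submodule.sum_mem _ fun j' hj' => ?_
    refine Submodule.mem_iSup_of_mem (d j') (Submodule.mem_iSup_of_mem
      (Finset.mem_range.mpr (Nat.lt_succ_of_le (hdle j' hj'))) ?_)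
    exact CoradAux.tmul_mem_tsub (SetLike.coe_mem _) (SetLike.coe_mem _)
  have hKA : ∀ m, coradFilt k D m = CoradAux.Agr 𝒟 m :=
    CoradAux.coradFilt_eq_Agr 𝒟 hGD hcoradgraded.1 hcoradgraded.2
  intro n
  induction n with
  | zero => rw [hF0]; rfl
  | succ n IH =>
    apply le_antisymm
    · intro y hy
      rw [CoradAux.coradFilt_succ_eq]
      simp only [Submodule.mem_comap]
      have hmem := hcoalgfilt (n+1) y hy
      refine CoradAux.mem_biSup_induction hmem
        (C := fun t => t ∈ CoradAux.tsub (⊤ : Submodule k C) (coradFilt k C n) ⊔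
          CoradAux.tsub (coradFilt k C 0) (⊤ : Submodule k C)) ?_ (Submodule.zero_mem _)
        (fun p q hp hq => Submodule.add_mem _ hp hq)
      intro i _ t ht
      rw [CoradAux.tensorSubmodule_eq] at ht
      by_cases hi0 : i = 0
      · subst hi0
        refine Submodule.mem_sup_right (CoradAux.tsub_mono ?_ le_top ht)
        exact le_of_eq (show F 0 = coradFilt k C 0 from hF0)
      · refine Submodule.mem_sup_left (CoradAux.tsub_mono le_top ?_ ht)
        rw [← IH]
        exact hmono (show n + 1 - i ≤ n by omega)
    · intro y hy
      have hyS : Coalgebra.comul (R := k) y ∈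
          CoradAux.tsub (⊤ : Submodule k C) (F n) ⊔
            CoradAux.tsub (F 0) (⊤ : Submodule k C) := by
        have h := hy
        rw [CoradAux.coradFilt_succ_eq] at h
        simp only [Submodule.mem_comap] at h
        rwa [← IH, show coradFilt k C 0 = F 0 from hF0.symm] at h
      obtain ⟨m0, hm0⟩ : ∃ m0, y ∈ F m0 := by
        have hmemtop : y ∈ (⊤ : Submodule k C) := trivial
        rw [← hexh] at hmemtop
        exact (Submodule.mem_iSup_of_directed _ hmono.directed_le).mp hmemtop
      have hdesc : ∀ m0, y ∈ F m0 → y ∈ F (n+1) := by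
        intro m0
        induction m0 with
        | zero => intro h; exact hmono (Nat.zero_le _) h
        | succ m IHm =>
          intro h
          by_cases hle : m + 1 ≤ n + 1
          · exact hmono hle h
          · push_neg at hle
            exact IHm (CoradAux.step_down F hmono 𝒟 e hcomul hKA (by omega) h hyS)
      exact hdesc m0 hm0
end

section
/- Let K = ⊕_{n≥0} K(n) be a graded Hopf algebra over a field k with K(0) = k. Then: (I) if K is generated as an algebra in degree one (by K(1)), then K is cocommutative; (II) if K is coradically graded, then K is commutative. -/
open scoped TensorProduct ENNReal

section Aux

open TensorProduct

variable {k : Type*} [Field k] {K : Type*} [Ring K] [HopfAlgebra k K]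

lemma mem_tensorSubmodule_tmul {C D : Submodule k K} {a b : K} (ha : a ∈ C) (hb : b ∈ D) :
    a ⊗ₜ[k] b ∈ tensorSubmodule k C D :=
  ⟨(⟨a, ha⟩ : C) ⊗ₜ[k] (⟨b, hb⟩ : D), rfl⟩

lemma tensorSubmodule_le {C D : Submodule k K} {P : Submodule k (K ⊗[k] K)}
    (h : ∀ a ∈ C, ∀ b ∈ D, a ⊗ₜ[k] b ∈ P) : tensorSubmodule k C D ≤ P := by
  rintro _ ⟨t, rfl⟩
  induction t using TensorProduct.induction_on with
  | zero => simpa using P.zero_mem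
  | tmul a b => simpa using h a a.2 b b.2
  | add u v hu hv => rw [map_add]; exact P.add_mem hu hv

lemma tensorSubmodule_span_one_left {D : Submodule k K} {w : K ⊗[k] K}
    (hw : w ∈ tensorSubmodule k (Submodule.span k {(1 : K)}) D) :
    ∃ d ∈ D, w = 1 ⊗ₜ[k] d := by
  have hle : tensorSubmodule k (Submodule.span k {(1 : K)}) D ≤
      LinearMap.range ((TensorProduct.mk k K K 1).comp D.subtype) := by
    refine tensorSubmodule_le fun a ha b hb => ?_
    obtain ⟨c, rfl⟩ := Submodule.mem_span_singleton.1 ha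
    refine ⟨c • ⟨b, hb⟩, ?_⟩
    simp [TensorProduct.smul_tmul']
  obtain ⟨d, hd⟩ := hle hw
  exact ⟨d, d.2, hd.symm⟩

lemma tensorSubmodule_span_one_right {C : Submodule k K} {w : K ⊗[k] K}
    (hw : w ∈ tensorSubmodule k C (Submodule.span k {(1 : K)})) :
    ∃ c ∈ C, w = c ⊗ₜ[k] 1 := by
  have hle : tensorSubmodule k C (Submodule.span k {(1 : K)}) ≤
      LinearMap.range (((TensorProduct.mk k K K).flip 1).comp C.subtype) := by
    refine tensorSubmodule_le fun a ha b hb => ?_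
    obtain ⟨c, rfl⟩ := Submodule.mem_span_singleton.1 hb
    refine ⟨c • ⟨a, ha⟩, ?_⟩
    simp [TensorProduct.smul_tmul']
  obtain ⟨c, hc⟩ := hle hw
  exact ⟨c, c.2, hc.symm⟩

/-- Elements of two image tensor submodules commute if the factors commute. -/
lemma tensorSubmodule_commute {C D C' D' : Submodule k K}
    (h1 : ∀ a ∈ C, ∀ b ∈ C', a * b = b * a)
    (h2 : ∀ a ∈ D, ∀ b ∈ D', a * b = b * a)
    {u v : K ⊗[k] K} (hu : u ∈ tensorSubmodule k C D) (hv : v ∈ tensorSubmodule k C' D') :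
    u * v = v * u := by
  have key : ∀ a ∈ C, ∀ b ∈ D, ∀ v' ∈ tensorSubmodule k C' D',
      (a ⊗ₜ[k] b) * v' = v' * (a ⊗ₜ[k] b) := by
    rintro a ha b hb _ ⟨t, rfl⟩
    induction t using TensorProduct.induction_on with
    | zero => simp
    | tmul c d =>
        simp only [TensorProduct.map_tmul, Submodule.coe_subtype,
          Algebra.TensorProduct.tmul_mul_tmul]
        rw [h1 a ha c c.2, h2 b hb d d.2]
    | add p q hp hq => rw [map_add, mul_add, add_mul, hp, hq]
  obtain ⟨s, rfl⟩ := hu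
  induction s using TensorProduct.induction_on with
  | zero => simp
  | tmul a b =>
      simpa using key a a.2 b b.2 v hv
  | add p q hp hq => rw [map_add, add_mul, mul_add, hp, hq]

/-- The key structure lemma: on a connected graded bialgebra, the comultiplication of a
homogeneous element of positive degree is `x ⊗ 1 + 1 ⊗ x` plus middle terms. -/
lemma comul_structure (𝒦 : ℕ → Submodule k K) [GradedAlgebra 𝒦]
    (hgradedcomul : ∀ n : ℕ, ∀ x ∈ 𝒦 n, Coalgebra.comul (R := k) x ∈
      ⨆ i ∈ Finset.range (n + 1), tensorSubmodule k (𝒦 i) (𝒦 (n - i)))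
    (hzero : 𝒦 0 = Submodule.span k {(1 : K)})
    {n : ℕ} (hn : 0 < n) {x : K} (hx : x ∈ 𝒦 n) :
    ∃ r ∈ ⨆ i ∈ Finset.Ioo 0 n, tensorSubmodule k (𝒦 i) (𝒦 (n - i)),
      Coalgebra.comul (R := k) x = x ⊗ₜ[k] 1 + 1 ⊗ₜ[k] x + r := by
  classical
  obtain ⟨μ, hμ⟩ := (Submodule.mem_iSup_finset_iff_exists_sum _ _).1 (hgradedcomul n x hx)
  have hdec := (DirectSum.Decomposition.isInternal 𝒦).submodule_iSupIndep
  -- left counit functional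
  set L : K ⊗[k] K →ₗ[k] K :=
    (TensorProduct.lid k K).toLinearMap ∘ₗ
      LinearMap.rTensor K (Coalgebra.counit (R := k) (A := K)) with hLdef
  have hLtmul : ∀ a b : K, L (a ⊗ₜ[k] b) = Coalgebra.counit (R := k) a • b := by
    intro a b; simp [hLdef]
  have hLcomul : L (Coalgebra.comul (R := k) x) = x := by
    simp [hLdef, Coalgebra.rTensor_counit_comul]
  have hLmem : ∀ i : ℕ, L ((μ i : K ⊗[k] K)) ∈ 𝒦 (n - i) := by
    intro i
    have hle : tensorSubmodule k (𝒦 i) (𝒦 (n - i)) ≤ (𝒦 (n - i)).comap L := by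
      refine tensorSubmodule_le fun a ha b hb => ?_
      simpa [Submodule.mem_comap, hLtmul] using Submodule.smul_mem _ _ hb
    exact hle (μ i).2
  -- right counit functional
  set R : K ⊗[k] K →ₗ[k] K :=
    (TensorProduct.rid k K).toLinearMap ∘ₗ
      LinearMap.lTensor K (Coalgebra.counit (R := k) (A := K)) with hRdef
  have hRtmul : ∀ a b : K, R (a ⊗ₜ[k] b) = Coalgebra.counit (R := k) b • a := by
    intro a b; simp [hRdef]
  have hRcomul : R (Coalgebra.comul (R := k) x) = x := by
    simp [hRdef, Coalgebra.lTensor_counit_comul]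
  have hRmem : ∀ i : ℕ, R ((μ i : K ⊗[k] K)) ∈ 𝒦 i := by
    intro i
    have hle : tensorSubmodule k (𝒦 i) (𝒦 (n - i)) ≤ (𝒦 i).comap R := by
      refine tensorSubmodule_le fun a ha b hb => ?_
      simpa [Submodule.mem_comap, hRtmul] using Submodule.smul_mem _ _ ha
    exact hle (μ i).2
  -- identify μ 0
  have hμ0mem : (μ 0 : K ⊗[k] K) ∈
      tensorSubmodule k (Submodule.span k {(1 : K)}) (𝒦 n) := by
    refine tensorSubmodule_le (C := 𝒦 0) (D := 𝒦 (n - 0)) ?_ (μ 0).2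
    intro a ha b hb
    exact mem_tensorSubmodule_tmul (hzero ▸ ha) hb
  obtain ⟨d, hd, hμ0⟩ := tensorSubmodule_span_one_left hμ0mem
  have hLd : L (μ 0 : K ⊗[k] K) = d := by
    rw [hμ0, hLtmul]; simp
  have hLsum : ∑ i ∈ Finset.range (n + 1), L (μ i : K ⊗[k] K) = x := by
    rw [← map_sum, hμ, hLcomul]
  have hxdmem : x - d ∈ ⨆ (j) (_ : j ≠ n), 𝒦 j := by
    have heq : x - d = ∑ i ∈ (Finset.range (n + 1)).erase 0, L (μ i : K ⊗[k] K) := by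
      rw [Finset.sum_erase_eq_sub (by simp), hLsum, hLd]
    rw [heq]
    refine Submodule.sum_mem _ fun i hi => ?_
    have hi0 : i ≠ 0 := (Finset.mem_erase.1 hi).1
    have hin : i < n + 1 := Finset.mem_range.1 (Finset.mem_erase.1 hi).2
    exact Submodule.mem_iSup_of_mem (n - i)
      (Submodule.mem_iSup_of_mem (by omega) (hLmem i))
  have hdx : d = x := by
    have h0 : x - d = 0 :=
      (Submodule.disjoint_def.1 (hdec n)) _ (sub_mem hx hd) hxdmem
    have := sub_eq_zero.1 h0
    exact this.symm
  -- identify μ n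
  have hμnmem : (μ n : K ⊗[k] K) ∈
      tensorSubmodule k (𝒦 n) (Submodule.span k {(1 : K)}) := by
    refine tensorSubmodule_le (C := 𝒦 n) (D := 𝒦 (n - n)) ?_ (μ n).2
    intro a ha b hb
    have hb' : b ∈ 𝒦 0 := by rwa [Nat.sub_self] at hb
    exact mem_tensorSubmodule_tmul ha (hzero ▸ hb')
  obtain ⟨c, hc, hμn⟩ := tensorSubmodule_span_one_right hμnmem
  have hRc : R (μ n : K ⊗[k] K) = c := by
    rw [hμn, hRtmul]; simp
  have hRsum : ∑ i ∈ Finset.range (n + 1), R (μ i : K ⊗[k] K) = x := by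
    rw [← map_sum, hμ, hRcomul]
  have hxcmem : x - c ∈ ⨆ (j) (_ : j ≠ n), 𝒦 j := by
    have heq : x - c = ∑ i ∈ (Finset.range (n + 1)).erase n, R (μ i : K ⊗[k] K) := by
      rw [Finset.sum_erase_eq_sub (by simp), hRsum, hRc]
    rw [heq]
    refine Submodule.sum_mem _ fun i hi => ?_
    have hi0 : i ≠ n := (Finset.mem_erase.1 hi).1
    exact Submodule.mem_iSup_of_mem i (Submodule.mem_iSup_of_mem hi0 (hRmem i))
  have hcx : c = x := by
    have h0 : x - c = 0 :=
      (Submodule.disjoint_def.1 (hdec n)) _ (sub_mem hx hc) hxcmem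
    exact (sub_eq_zero.1 h0).symm
  subst hdx hcx
  -- assemble
  refine ⟨∑ i ∈ Finset.Ioo 0 n, (μ i : K ⊗[k] K), ?_, ?_⟩
  · exact Submodule.sum_mem _ fun i hi =>
      Submodule.mem_iSup_of_mem i (Submodule.mem_iSup_of_mem hi (μ i).2)
  · rw [← hμ]
    have hsplit : Finset.range (n + 1) = insert 0 (insert n (Finset.Ioo 0 n)) := by
      ext j
      simp only [Finset.mem_range, Finset.mem_insert, Finset.mem_Ioo]
      omega
    rw [hsplit, Finset.sum_insert (by simp; omega),
      Finset.sum_insert (by simp)]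
    rw [hμ0, hμn]
    abel

lemma comm_eq_algComm (z : K ⊗[k] K) :
    (TensorProduct.comm k K K) z = (Algebra.TensorProduct.comm k K K) z := by
  induction z using TensorProduct.induction_on with
  | zero => simp
  | tmul a b => simp [Algebra.TensorProduct.comm_tmul]
  | add u v hu hv => rw [map_add, map_add, hu, hv]

end Aux

/-- Let `K = ⊕ K(n)` be a graded Hopf algebra with `K(0) = k`.  Then
(I) if `K` is generated in degree one it is cocommutative, and (II) if `K` is coradically
graded it is commutative. -/
theorem graded_hopf_cocomm_and_comm (k : Type*) [Field k]
    (K : Type*) [Ring K] [HopfAlgebra k K]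
    (𝒦 : ℕ → Submodule k K) [GradedAlgebra 𝒦]
    (hgradedcomul : ∀ n : ℕ, ∀ x ∈ 𝒦 n, Coalgebra.comul (R := k) x ∈
      ⨆ i ∈ Finset.range (n + 1), tensorSubmodule k (𝒦 i) (𝒦 (n - i)))
    (hgradedantipode : ∀ n : ℕ, ∀ x ∈ 𝒦 n, HopfAlgebra.antipode (R := k) x ∈ 𝒦 n)
    (hzero : 𝒦 0 = Submodule.span k {(1 : K)}) :
    ((Algebra.adjoin k (𝒦 1 : Set K) = ⊤ →
      ∀ x : K, (TensorProduct.comm k K K) (Coalgebra.comul (R := k) x) =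
        Coalgebra.comul (R := k) x)) ∧
    ((coradFilt k K 0 = 𝒦 0 ∧ coradFilt k K 1 = 𝒦 0 ⊔ 𝒦 1) →
      ∀ x y : K, x * y = y * x) := by
  classical
  have onemem : (1 : K) ∈ 𝒦 0 := SetLike.one_mem_graded 𝒦
  constructor
  · -- Part (I): generated in degree one ⟹ cocommutative
    intro hadj x
    have hsub : (𝒦 1 : Set K) ⊆ ↑(AlgHom.equalizer (Bialgebra.comulAlgHom k K)
        ((Algebra.TensorProduct.comm k K K).toAlgHom.comp (Bialgebra.comulAlgHom k K))) := by
      intro y hy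
      obtain ⟨r, hr, hΔy⟩ := comul_structure 𝒦 hgradedcomul hzero one_pos hy
      have hIoo : Finset.Ioo 0 1 = (∅ : Finset ℕ) := rfl
      rw [hIoo] at hr
      simp only [Finset.notMem_empty, iSup_false, iSup_bot, Submodule.mem_bot] at hr
      subst hr
      simp only [SetLike.mem_coe, AlgHom.mem_equalizer, AlgHom.coe_comp,
        Function.comp_apply, AlgEquiv.toAlgHom_eq_coe, AlgHom.coe_coe,
        Bialgebra.comulAlgHom_apply]
      rw [hΔy]
      simp only [add_zero, map_add, AlgEquiv.toAlgHom_apply, Algebra.TensorProduct.comm_tmul]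
      abel
    have htop : (⊤ : Subalgebra k K) ≤ AlgHom.equalizer (Bialgebra.comulAlgHom k K)
        ((Algebra.TensorProduct.comm k K K).toAlgHom.comp (Bialgebra.comulAlgHom k K)) := by
      rw [← hadj]
      exact Algebra.adjoin_le hsub
    have hx := (AlgHom.mem_equalizer _ _ x).1 (htop (Algebra.mem_top))
    simp only [AlgHom.coe_comp, Function.comp_apply, AlgEquiv.toAlgHom_eq_coe,
      AlgHom.coe_coe, Bialgebra.comulAlgHom_apply] at hx
    rw [comm_eq_algComm]
    exact hx.symm
  · -- Part (II): coradically graded ⟹ commutative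
    rintro ⟨h0, h1⟩
    have hcor : coradical k K = 𝒦 0 := h0
    have hdec := (DirectSum.Decomposition.isInternal 𝒦).submodule_iSupIndep
    have comm0 : ∀ x ∈ 𝒦 0, ∀ y : K, x * y = y * x := by
      intro x hx y
      rw [hzero] at hx
      obtain ⟨c, rfl⟩ := Submodule.mem_span_singleton.1 hx
      rw [smul_mul_assoc, mul_smul_comm, one_mul, mul_one]
    have main : ∀ N : ℕ, ∀ m n : ℕ, m + n ≤ N →
        ∀ x ∈ 𝒦 m, ∀ y ∈ 𝒦 n, x * y = y * x := by
      intro N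
      induction N with
      | zero =>
          intro m n hmn x hx y hy
          have hm : m = 0 := by omega
          subst hm
          exact comm0 x hx y
      | succ N ih =>
          intro m n hmn x hx y hy
          by_cases hN : m + n ≤ N
          · exact ih m n hN x hx y hy
          have hmnN : m + n = N + 1 := by omega
          rcases Nat.eq_zero_or_pos m with hm | hm
          · subst hm; exact comm0 x hx y
          rcases Nat.eq_zero_or_pos n with hn | hn
          · subst hn; exact (comm0 y hy x).symm
          obtain ⟨r, hr, hΔx⟩ := comul_structure 𝒦 hgradedcomul hzero hm hx
          obtain ⟨s, hs, hΔy⟩ := comul_structure 𝒦 hgradedcomul hzero hn hy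
          set z := x * y - y * x with hz
          have hzmem : z ∈ 𝒦 (m + n) := by
            refine sub_mem (SetLike.mul_mem_graded hx hy) ?_
            have := SetLike.mul_mem_graded hy hx
            rwa [Nat.add_comm n m] at this
          -- pairwise commutation from the induction hypothesis
          have key : ∀ i i' j j' : ℕ, i + j ≤ N → i' + j' ≤ N →
              ∀ u ∈ tensorSubmodule k (𝒦 i) (𝒦 i'),
              ∀ v ∈ tensorSubmodule k (𝒦 j) (𝒦 j'), u * v = v * u := by
            intro i i' j j' hij hij' u hu v hv
            exact tensorSubmodule_commute
              (fun a ha b hb => ih i j hij a ha b hb)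
              (fun a ha b hb => ih i' j' hij' a ha b hb) hu hv
          have keyS : ∀ i i' : ℕ,
              (∀ j ∈ Finset.Ioo 0 n, i + j ≤ N ∧ i' + (n - j) ≤ N) →
              ∀ u ∈ tensorSubmodule k (𝒦 i) (𝒦 i'), u * s = s * u := by
            intro i i' hcond u hu
            have hker : (⨆ j ∈ Finset.Ioo 0 n, tensorSubmodule k (𝒦 j) (𝒦 (n - j))) ≤
                LinearMap.ker (LinearMap.mulLeft k u - LinearMap.mulRight k u) := by
              refine iSup₂_le fun j hj => fun v hv => ?_
              simp only [LinearMap.mem_ker, LinearMap.sub_apply, LinearMap.mulLeft_apply,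
                LinearMap.mulRight_apply, sub_eq_zero]
              exact key i i' j (n - j) (hcond j hj).1 (hcond j hj).2 u hu v hv
            have := hker hs
            simpa only [LinearMap.mem_ker, LinearMap.sub_apply, LinearMap.mulLeft_apply,
              LinearMap.mulRight_apply, sub_eq_zero] using this
          have keyR : ∀ j j' : ℕ,
              (∀ i ∈ Finset.Ioo 0 m, i + j ≤ N ∧ (m - i) + j' ≤ N) →
              ∀ v ∈ tensorSubmodule k (𝒦 j) (𝒦 j'), r * v = v * r := by
            intro j j' hcond v hv
            have hker : (⨆ i ∈ Finset.Ioo 0 m, tensorSubmodule k (𝒦 i) (𝒦 (m - i))) ≤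
                LinearMap.ker (LinearMap.mulRight k v - LinearMap.mulLeft k v) := by
              refine iSup₂_le fun i hi => fun u hu => ?_
              simp only [LinearMap.mem_ker, LinearMap.sub_apply, LinearMap.mulLeft_apply,
                LinearMap.mulRight_apply, sub_eq_zero]
              exact key i (m - i) j j' (hcond i hi).1 (hcond i hi).2 u hu v hv
            have := hker hr
            simpa only [LinearMap.mem_ker, LinearMap.sub_apply, LinearMap.mulLeft_apply,
              LinearMap.mulRight_apply, sub_eq_zero] using this
          have hrs : r * s = s * r := by
            have hker : (⨆ i ∈ Finset.Ioo 0 m, tensorSubmodule k (𝒦 i) (𝒦 (m - i))) ≤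
                LinearMap.ker (LinearMap.mulRight k s - LinearMap.mulLeft k s) := by
              refine iSup₂_le fun i hi => fun u hu => ?_
              simp only [LinearMap.mem_ker, LinearMap.sub_apply, LinearMap.mulLeft_apply,
                LinearMap.mulRight_apply, sub_eq_zero]
              refine keyS i (m - i) (fun j hj => ?_) u hu
              simp only [Finset.mem_Ioo] at hi hj
              constructor <;> omega
            have := hker hr
            simpa only [LinearMap.mem_ker, LinearMap.sub_apply, LinearMap.mulLeft_apply,
              LinearMap.mulRight_apply, sub_eq_zero] using this
          -- specific commutations
          have hxt : x ⊗ₜ[k] (1 : K) ∈ tensorSubmodule k (𝒦 m) (𝒦 0) :=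
            mem_tensorSubmodule_tmul hx onemem
          have htx : (1 : K) ⊗ₜ[k] x ∈ tensorSubmodule k (𝒦 0) (𝒦 m) :=
            mem_tensorSubmodule_tmul onemem hx
          have hyt : y ⊗ₜ[k] (1 : K) ∈ tensorSubmodule k (𝒦 n) (𝒦 0) :=
            mem_tensorSubmodule_tmul hy onemem
          have hty : (1 : K) ⊗ₜ[k] y ∈ tensorSubmodule k (𝒦 0) (𝒦 n) :=
            mem_tensorSubmodule_tmul onemem hy
          have ha1b2 : (x ⊗ₜ[k] (1 : K)) * ((1 : K) ⊗ₜ[k] y)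
              = ((1 : K) ⊗ₜ[k] y) * (x ⊗ₜ[k] (1 : K)) := by
            simp [Algebra.TensorProduct.tmul_mul_tmul]
          have ha2b1 : ((1 : K) ⊗ₜ[k] x) * (y ⊗ₜ[k] (1 : K))
              = (y ⊗ₜ[k] (1 : K)) * ((1 : K) ⊗ₜ[k] x) := by
            simp [Algebra.TensorProduct.tmul_mul_tmul]
          have ha1s : (x ⊗ₜ[k] (1 : K)) * s = s * (x ⊗ₜ[k] (1 : K)) :=
            keyS m 0 (fun j hj => by simp only [Finset.mem_Ioo] at hj; constructor <;> omega)
              _ hxt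
          have ha2s : ((1 : K) ⊗ₜ[k] x) * s = s * ((1 : K) ⊗ₜ[k] x) :=
            keyS 0 m (fun j hj => by simp only [Finset.mem_Ioo] at hj; constructor <;> omega)
              _ htx
          have hrb1 : r * (y ⊗ₜ[k] (1 : K)) = (y ⊗ₜ[k] (1 : K)) * r :=
            keyR n 0 (fun i hi => by simp only [Finset.mem_Ioo] at hi; constructor <;> omega)
              _ hyt
          have hrb2 : r * ((1 : K) ⊗ₜ[k] y) = ((1 : K) ⊗ₜ[k] y) * r :=
            keyR 0 n (fun i hi => by simp only [Finset.mem_Ioo] at hi; constructor <;> omega)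
              _ hty
          -- compute Δz
          have expand : ∀ a1 a2 r' b1 b2 s' : K ⊗[k] K,
              (a1 + a2 + r') * (b1 + b2 + s') - (b1 + b2 + s') * (a1 + a2 + r') =
              (a1 * b1 - b1 * a1) + (a2 * b2 - b2 * a2) + (a1 * b2 - b2 * a1)
                + (a2 * b1 - b1 * a2) + (a1 * s' - s' * a1) + (a2 * s' - s' * a2)
                + (r' * b1 - b1 * r') + (r' * b2 - b2 * r') + (r' * s' - s' * r') := by
            intros; noncomm_ring
          have hΔz : Coalgebra.comul (R := k) z = z ⊗ₜ[k] 1 + 1 ⊗ₜ[k] z := by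
            rw [hz, map_sub, Bialgebra.comul_mul, Bialgebra.comul_mul, hΔx, hΔy]
            rw [expand, ha1b2, ha2b1, ha1s, ha2s, hrb1, hrb2, hrs]
            simp only [sub_self, add_zero]
            simp only [Algebra.TensorProduct.tmul_mul_tmul, one_mul, mul_one]
            rw [TensorProduct.sub_tmul, TensorProduct.tmul_sub]
          -- z lies in the first coradical filtration step
          have hz1 : z ∈ 𝒦 0 ⊔ 𝒦 1 := by
            rw [← h1]
            show Coalgebra.comul (R := k) z ∈
              tensorSubmodule k ⊤ (coradFilt k K 0) ⊔ tensorSubmodule k (coradical k K) ⊤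
            rw [hΔz]
            refine add_mem (Submodule.mem_sup_left ?_) (Submodule.mem_sup_right ?_)
            · exact mem_tensorSubmodule_tmul Submodule.mem_top (h0 ▸ onemem)
            · exact mem_tensorSubmodule_tmul (hcor ▸ onemem) Submodule.mem_top
          -- but z is homogeneous of degree ≥ 2, so z = 0
          have hle : 𝒦 0 ⊔ 𝒦 1 ≤ ⨆ (j) (_ : j ≠ m + n), 𝒦 j := by
            refine sup_le ?_ ?_
            · exact le_iSup_of_le 0 (le_iSup_of_le (by omega) le_rfl)
            · exact le_iSup_of_le 1 (le_iSup_of_le (by omega) le_rfl)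
          have hz0 : z = 0 :=
            (Submodule.disjoint_def.1 (hdec (m + n))) z hzmem (hle hz1)
          exact sub_eq_zero.1 hz0
    have homog : ∀ (m : ℕ) (u : K), u ∈ 𝒦 m → ∀ (n : ℕ) (v : K), v ∈ 𝒦 n →
        u * v = v * u := fun m u hu n v hv => main (m + n) m n le_rfl u hu v hv
    have step1 : ∀ (n : ℕ) (v : K), v ∈ 𝒦 n → ∀ x : K, x * v = v * x := by
      intro n v hv
      refine DirectSum.Decomposition.inductionOn 𝒦 (by simp) ?_ ?_
      · intro i u
        exact homog i u u.2 n v hv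
      · intro a b ha hb
        rw [add_mul, mul_add, ha, hb]
    intro x y
    refine DirectSum.Decomposition.inductionOn 𝒦 (motive := fun w => x * w = w * x)
      (by simp) ?_ ?_ y
    · intro i v
      exact step1 i (v : K) v.2 x
    · intro a b ha hb
      rw [mul_add, add_mul, ha, hb]
end
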